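/- arXiv:2002.07909 — 11 statements merged into one kernel-verified Lean document; each statement's English description precedes it below -/
import Mathlib

section
/- Given 0 < ν < 1, real constants A, B, positive function p : {a+1, a+2, ...} → (0,∞), and functions q, h on {a+1, a+2, ...}, the initial value problem ∇[p(t+1)∇_{a*}^ν x(t+1)] + q(t)x(t) = h(t) for t ∈ ℕ_{a+1}, with x(a) = A and ∇x(a+1) = B, has a unique solution x : ℕ_a → ℝ. -/
open Finset

/-- Generalized rising function `x^{↑μ} = Γ(x+μ)/Γ(x)` (equals 0 when `Γ x = 0`,
matching the convention `0^{↑ν} = 0`). -/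
noncomputable def rise (x μ : ℝ) : ℝ := Real.Gamma (x + μ) / Real.Gamma x

/-- Nabla (backward) difference. -/
def nabla (f : ℤ → ℝ) (t : ℤ) : ℝ := f t - f (t - 1)

/-- Caputo nabla fractional difference of order `ν ∈ (0,1)` based at `a`. -/
noncomputable def caputo (ν : ℝ) (a : ℤ) (x : ℤ → ℝ) (t : ℤ) : ℝ :=
  ∑ τ ∈ Finset.Icc (a + 1) t,
    rise ((t - τ + 1 : ℤ) : ℝ) (-ν) / Real.Gamma (1 - ν) * nabla x τ

/-- Nabla fractional sum of order `ν` based at `a`. -/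
noncomputable def fsum (ν : ℝ) (a : ℤ) (f : ℤ → ℝ) (t : ℤ) : ℝ :=
  ∑ τ ∈ Finset.Icc (a + 1) t,
    rise ((t - τ + 1 : ℤ) : ℝ) (ν - 1) / Real.Gamma ν * f τ

/-- The self-adjoint operator `L_a x(t) = ∇[p(t+1)∇_{a*}^ν x(t+1)] + q(t)x(t)`. -/
noncomputable def Lop (ν : ℝ) (a : ℤ) (p q : ℤ → ℝ) (x : ℤ → ℝ) (t : ℤ) : ℝ :=
  (p (t + 1) * caputo ν a x (t + 1) - p t * caputo ν a x t) + q t * x t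
noncomputable def Scoef (ν : ℝ) (a t : ℤ) (x : ℤ → ℝ) : ℝ :=
  ∑ τ ∈ Finset.Icc (a+1) t, rise ((t + 1 - τ + 1 : ℤ) : ℝ) (-ν) / Real.Gamma (1-ν) * nabla x τ

noncomputable def nextval (ν : ℝ) (a : ℤ) (p q h : ℤ → ℝ) (t : ℤ) (x : ℤ → ℝ) : ℝ :=
  x t + (h t - q t * x t + p t * caputo ν a x t) / p (t+1) - Scoef ν a t x

lemma caputo_succ (ν : ℝ) (hν1 : ν < 1) (a t : ℤ) (ht : a ≤ t) (x : ℤ → ℝ) :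
    caputo ν a x (t+1) = nabla x (t+1) + Scoef ν a t x := by
  have hΓ : Real.Gamma (1 - ν) ≠ 0 := (Real.Gamma_pos_of_pos (by linarith)).ne'
  have hins : Finset.Icc (a+1) (t+1) = insert (t+1) (Finset.Icc (a+1) t) := by
    ext s; simp [Finset.mem_Icc]; omega
  unfold caputo Scoef
  rw [hins, Finset.sum_insert (by simp)]
  congr 1
  have h1 : ((t + 1 - (t+1) + 1 : ℤ) : ℝ) = 1 := by push_cast; ring
  rw [h1]
  have : rise 1 (-ν) = Real.Gamma (1 - ν) := by
    unfold rise
    rw [Real.Gamma_one]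
    norm_num
    ring_nf
  rw [this, div_self hΓ, one_mul]

lemma lop_iff (ν : ℝ) (hν1 : ν < 1) (a : ℤ) (p q h : ℤ → ℝ) (t : ℤ) (ht : a ≤ t)
    (hpt : p (t+1) ≠ 0) (x : ℤ → ℝ) :
    Lop ν a p q x t = h t ↔ x (t+1) = nextval ν a p q h t x := by
  unfold Lop nextval
  rw [caputo_succ ν hν1 a t ht x]
  unfold nabla
  have h1 : (t + 1 - 1 : ℤ) = t := by ring
  rw [h1]
  constructor
  · intro H
    field_simp
    nlinarith [H]
  · intro H
    rw [H]
    field_simp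
    ring

lemma nextval_congr (ν : ℝ) (a : ℤ) (p q h : ℤ → ℝ) (t : ℤ) (ht : a ≤ t)
    (f g : ℤ → ℝ) (hfg : ∀ s, a ≤ s → s ≤ t → f s = g s) :
    nextval ν a p q h t f = nextval ν a p q h t g := by
  have hc : caputo ν a f t = caputo ν a g t := by
    unfold caputo
    refine Finset.sum_congr rfl fun τ hτ => ?_
    simp only [Finset.mem_Icc] at hτ
    unfold nabla
    rw [hfg τ (by omega) (by omega), hfg (τ-1) (by omega) (by omega)]
  have hs : Scoef ν a t f = Scoef ν a t g := by
    unfold Scoef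
    refine Finset.sum_congr rfl fun τ hτ => ?_
    simp only [Finset.mem_Icc] at hτ
    unfold nabla
    rw [hfg τ (by omega) (by omega), hfg (τ-1) (by omega) (by omega)]
  unfold nextval
  rw [hc, hs, hfg t ht le_rfl]

noncomputable def sol (ν : ℝ) (a : ℤ) (A B : ℝ) (p q h : ℤ → ℝ) : ℕ → ℝ
  | 0 => A
  | 1 => A + B
  | (n+2) => nextval ν a p q h (a + n + 1)
      (fun s => if hs : a ≤ s ∧ s ≤ a + n + 1 then sol ν a A B p q h (s - a).toNat else 0)
  decreasing_by omega


theorem selfadjoint_ivp_exists_unique (ν : ℝ) (hν : 0 < ν) (hν1 : ν < 1) (a : ℤ)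
    (A B : ℝ) (p q h : ℤ → ℝ) (hp : ∀ t, a + 1 ≤ t → 0 < p t) :
    ∃ x : ℤ → ℝ,
      (x a = A ∧ nabla x (a + 1) = B ∧ ∀ t, a + 1 ≤ t → Lop ν a p q x t = h t) ∧
      ∀ y : ℤ → ℝ,
        (y a = A ∧ nabla y (a + 1) = B ∧ ∀ t, a + 1 ≤ t → Lop ν a p q y t = h t) →
        ∀ t, a ≤ t → y t = x t := by
  set x : ℤ → ℝ := fun t => sol ν a A B p q h (t - a).toNat with hx
  have hxa : x a = A := by simp [hx, sol]
  have hxa1 : x (a+1) = A + B := by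
    have : (a + 1 - a).toNat = 1 := by omega
    simp [hx, this, sol]
  have hstep : ∀ t : ℤ, a + 1 ≤ t → x (t+1) = nextval ν a p q h t x := by
    intro t ht
    obtain ⟨n, hn⟩ : ∃ n : ℕ, t = a + n + 1 := ⟨(t - a - 1).toNat, by omega⟩
    have h2 : (t + 1 - a).toNat = n + 2 := by omega
    rw [hx]
    simp only [h2]
    rw [sol, hn]
    refine nextval_congr ν a p q h _ (by omega) _ _ fun s hs1 hs2 => ?_
    rw [dif_pos ⟨hs1, hs2⟩]
  have hpx : ∀ t : ℤ, a + 1 ≤ t → p (t + 1) ≠ 0 := fun t ht => (hp (t+1) (by omega)).ne'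
  refine ⟨x, ⟨hxa, ?_, fun t ht => ?_⟩, ?_⟩
  · unfold nabla
    have : (a + 1 - 1 : ℤ) = a := by ring
    rw [this, hxa, hxa1]; ring
  · exact (lop_iff ν hν1 a p q h t (by omega) (hpx t ht) x).2 (hstep t ht)
  · rintro y ⟨hya, hyb, hyL⟩
    have hya1 : y (a+1) = A + B := by
      unfold nabla at hyb
      have : (a + 1 - 1 : ℤ) = a := by ring
      rw [this, hya] at hyb
      linarith
    have key : ∀ n : ℕ, y (a + n) = x (a + n) := by
      intro n
      induction n using Nat.strong_induction_on with
      | _ n ih =>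
        match n with
        | 0 => simpa using hya.trans hxa.symm
        | 1 => push_cast; simpa using hya1.trans hxa1.symm
        | (m+2) =>
          have ht : a + 1 ≤ a + (m:ℤ) + 1 := by omega
          have e1 : y (a + (m:ℤ) + 1 + 1) = nextval ν a p q h (a + (m:ℤ) + 1) y :=
            (lop_iff ν hν1 a p q h _ (by omega) (hpx _ ht) y).1 (hyL _ ht)
          have e2 : nextval ν a p q h (a + (m:ℤ) + 1) y = nextval ν a p q h (a + (m:ℤ) + 1) x := by
            refine nextval_congr ν a p q h _ (by omega) _ _ fun s hs1 hs2 => ?_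
            have hsn : s = a + ((s - a).toNat : ℤ) := by omega
            have hlt : (s - a).toNat < m + 2 := by omega
            rw [hsn]; exact ih _ hlt
          have e3 : x (a + (m:ℤ) + 1 + 1) = nextval ν a p q h (a + (m:ℤ) + 1) x :=
            hstep _ ht
          have : (a + ((m:ℤ) + 2) : ℤ) = a + (m:ℤ) + 1 + 1 := by ring
          push_cast
          rw [this, e1, e2, ← e3]
    intro t hta
    have : t = a + ((t - a).toNat : ℤ) := by omega
    rw [this]; exact key _
end

section
/- For μ, ν > 0 and f : ℕ_a → ℝ, the fractional sums compose: ∇_a^{-ν}∇_a^{-μ} f(t) = ∇_a^{-ν-μ} f(t) for all t ∈ ℕ_a. -/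
open Finset

noncomputable def Acoef (ν : ℝ) (n : ℕ) : ℝ :=
  Real.Gamma (n + ν) / (Real.Gamma (n + 1) * Real.Gamma ν)

lemma Acoef_zero (ν : ℝ) (hν : 0 < ν) : Acoef ν 0 = 1 := by
  simp [Acoef, Real.Gamma_one]
  exact ne_of_gt (Real.Gamma_pos_of_pos hν)

lemma Acoef_succ (ν : ℝ) (hν : 0 < ν) (n : ℕ) :
    ((n : ℝ) + 1) * Acoef ν (n + 1) = ((n : ℝ) + ν) * Acoef ν n := by
  have h1 : Real.Gamma ((n : ℝ) + 1 + ν) = ((n : ℝ) + ν) * Real.Gamma ((n : ℝ) + ν) := by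
    have := Real.Gamma_add_one (show ((n:ℝ) + ν) ≠ 0 by positivity)
    rw [show (n : ℝ) + 1 + ν = (n : ℝ) + ν + 1 by ring, this]
  have h2 : Real.Gamma ((n : ℝ) + 1 + 1) = ((n : ℝ) + 1) * Real.Gamma ((n : ℝ) + 1) := by
    exact Real.Gamma_add_one (by positivity)
  have hg1 : Real.Gamma ((n : ℝ) + 1) ≠ 0 := ne_of_gt (Real.Gamma_pos_of_pos (by positivity))
  have hgν : Real.Gamma ν ≠ 0 := ne_of_gt (Real.Gamma_pos_of_pos hν)
  simp only [Acoef]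
  push_cast
  rw [h1, h2]
  field_simp

lemma Acoef_conv (ν μ : ℝ) (hν : 0 < ν) (hμ : 0 < μ) (n : ℕ) :
    ∑ j ∈ Finset.range (n + 1), Acoef ν j * Acoef μ (n - j) = Acoef (ν + μ) n := by
  induction n with
  | zero => simp [Acoef_zero ν hν, Acoef_zero μ hμ, Acoef_zero _ (by positivity : (0:ℝ) < ν + μ)]
  | succ n ih =>
    have hn1 : ((n : ℝ) + 1) ≠ 0 := by positivity
    have key : ((n : ℝ) + 1) * ∑ j ∈ Finset.range (n + 2), Acoef ν j * Acoef μ (n + 1 - j)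
        = ((n : ℝ) + (ν + μ)) * Acoef (ν + μ) n := by
      have expand : ∀ j ∈ Finset.range (n + 2),
          ((n : ℝ) + 1) * (Acoef ν j * Acoef μ (n + 1 - j))
          = ((j : ℝ) * Acoef ν j) * Acoef μ (n + 1 - j)
            + Acoef ν j * ((((n + 1 - j : ℕ) : ℝ)) * Acoef μ (n + 1 - j)) := by
        intro j hj
        have hj' : j ≤ n + 1 := by exact Nat.lt_succ_iff.mp (Finset.mem_range.mp hj)
        have : ((n + 1 - j : ℕ) : ℝ) = (n : ℝ) + 1 - j := by
          push_cast [hj']; ring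
        rw [this]; ring
      rw [Finset.mul_sum, Finset.sum_congr rfl expand, Finset.sum_add_distrib]
      have e1 : ∑ j ∈ Finset.range (n + 2), ((j : ℝ) * Acoef ν j) * Acoef μ (n + 1 - j)
          = ∑ i ∈ Finset.range (n + 1), (((i : ℝ) + ν) * Acoef ν i) * Acoef μ (n - i) := by
        rw [Finset.sum_range_succ'] -- splits off j = 0
        simp only [Nat.cast_zero, zero_mul, zero_mul, add_zero]
        refine Finset.sum_congr rfl fun i hi => ?_
        have : (n + 1 - (i + 1)) = n - i := by omega
        rw [this]
        push_cast
        rw [Acoef_succ ν hν i]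
      have e2 : ∑ j ∈ Finset.range (n + 2), Acoef ν j * ((((n + 1 - j : ℕ) : ℝ)) * Acoef μ (n + 1 - j))
          = ∑ j ∈ Finset.range (n + 1), Acoef ν j * (((n : ℝ) - j + μ) * Acoef μ (n - j)) := by
        rw [Finset.sum_range_succ]
        simp only [Nat.sub_self, Nat.cast_zero, zero_mul, mul_zero, add_zero]
        refine Finset.sum_congr rfl fun j hj => ?_
        have hj' : j ≤ n := by exact Nat.lt_succ_iff.mp (Finset.mem_range.mp hj)
        have h1 : n + 1 - j = (n - j) + 1 := by omega
        rw [h1]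
        have h2 : (((n - j : ℕ) : ℝ)) = (n : ℝ) - j := by push_cast [hj']; ring
        have := Acoef_succ μ hμ (n - j)
        rw [h2] at this
        rw [← this, Nat.cast_add, Nat.cast_one, h2]
      rw [e1, e2, ← ih, Finset.mul_sum, ← Finset.sum_add_distrib]
      refine Finset.sum_congr rfl fun j hj => ?_
      ring
    have key2 := Acoef_succ (ν + μ) (by positivity) n
    have : ((n : ℝ) + 1) * ∑ j ∈ Finset.range (n + 2), Acoef ν j * Acoef μ (n + 1 - j)
        = ((n : ℝ) + 1) * Acoef (ν + μ) (n + 1) := by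
      rw [key, key2]
    exact mul_left_cancel₀ hn1 this


lemma kernel_eq (ν : ℝ) (t τ : ℤ) (h : τ ≤ t) :
    rise ((t - τ + 1 : ℤ) : ℝ) (ν - 1) / Real.Gamma ν = Acoef ν (t - τ).toNat := by
  have hn : ((t - τ).toNat : ℝ) = ((t : ℝ) - τ) := by
    have h0 : ((t - τ).toNat : ℤ) = t - τ := Int.toNat_of_nonneg (by omega)
    have h1 : (((t - τ).toNat : ℤ) : ℝ) = ((t : ℝ) - τ) := by rw [h0]; push_cast; ring
    exact_mod_cast h1
  simp only [rise, Acoef, hn]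
  push_cast
  rw [div_div]
  ring_nf

lemma kernelConv (ν μ : ℝ) (hν : 0 < ν) (hμ : 0 < μ) (s t : ℤ) (h : s ≤ t) :
    ∑ τ ∈ Finset.Icc s t, Acoef ν (t - τ).toNat * Acoef μ (τ - s).toNat
      = Acoef (ν + μ) (t - s).toNat := by
  set n : ℕ := (t - s).toNat with hn
  rw [← Acoef_conv ν μ hν hμ n]
  refine Finset.sum_nbij' (i := fun τ => (t - τ).toNat) (j := fun j => t - (j : ℤ))
    ?_ ?_ ?_ ?_ ?_
  · intro τ hτ
    simp only [Finset.mem_Icc] at hτ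
    simp only [Finset.mem_range]
    omega
  · intro j hj
    simp only [Finset.mem_range] at hj
    simp only [Finset.mem_Icc]
    omega
  · intro τ hτ
    simp only [Finset.mem_Icc] at hτ
    omega
  · intro j hj
    simp only [Finset.mem_range] at hj
    omega
  · intro τ hτ
    simp only [Finset.mem_Icc] at hτ
    have h1 : n - (t - τ).toNat = (τ - s).toNat := by omega
    rw [h1]


theorem fsum_comp (μ ν : ℝ) (hμ : 0 < μ) (hν : 0 < ν) (a : ℤ) (f : ℤ → ℝ) :
    ∀ t, a ≤ t → fsum ν a (fsum μ a f) t = fsum (ν + μ) a f t := by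
  intro t _
  unfold fsum
  have step1 : ∀ τ ∈ Finset.Icc (a + 1) t,
      rise ((t - τ + 1 : ℤ) : ℝ) (ν - 1) / Real.Gamma ν *
        (∑ s ∈ Finset.Icc (a + 1) τ, rise ((τ - s + 1 : ℤ) : ℝ) (μ - 1) / Real.Gamma μ * f s)
      = ∑ s ∈ Finset.Icc (a + 1) τ, Acoef ν (t - τ).toNat * (Acoef μ (τ - s).toNat * f s) := by
    intro τ hτ
    simp only [Finset.mem_Icc] at hτ
    rw [kernel_eq ν t τ hτ.2, Finset.mul_sum]
    refine Finset.sum_congr rfl fun s hs => ?_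
    simp only [Finset.mem_Icc] at hs
    rw [kernel_eq μ τ s hs.2]
  rw [Finset.sum_congr rfl step1]
  rw [Finset.sum_comm' (s' := fun s => Finset.Icc s t) (t' := Finset.Icc (a + 1) t)
    (fun τ s => by simp only [Finset.mem_Icc]; omega)]
  refine Finset.sum_congr rfl fun s hs => ?_
  simp only [Finset.mem_Icc] at hs
  rw [kernel_eq (ν + μ) t s hs.2]
  calc ∑ τ ∈ Finset.Icc s t, Acoef ν (t - τ).toNat * (Acoef μ (τ - s).toNat * f s)
      = (∑ τ ∈ Finset.Icc s t, Acoef ν (t - τ).toNat * Acoef μ (τ - s).toNat) * f s := by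
        rw [Finset.sum_mul]; exact Finset.sum_congr rfl fun τ _ => by ring
    _ = Acoef (ν + μ) (t - s).toNat * f s := by rw [kernelConv ν μ hν hμ s t hs.2]
end

section
/- If x₁, x₂ : ℕ_a → ℝ are linearly independent solutions of the homogeneous self-adjoint equation L_a x(t) = 0 on ℕ_{a+1}, then every solution x of L_a x(t) = 0 can be written uniquely as x(t) = c₁x₁(t) + c₂x₂(t) for constants c₁, c₂ ∈ ℝ. -/
open Finset

lemma caputo_lin (ν : ℝ) (a : ℤ) (c₁ c₂ : ℝ) (u v w : ℤ → ℝ) (t : ℤ) :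
    caputo ν a (fun s => u s - (c₁ * v s + c₂ * w s)) t
      = caputo ν a u t - (c₁ * caputo ν a v t + c₂ * caputo ν a w t) := by
  simp only [caputo, nabla, Finset.mul_sum, ← Finset.sum_add_distrib,
    ← Finset.sum_sub_distrib]
  exact Finset.sum_congr rfl fun τ _ => by ring

lemma Lop_lin (ν : ℝ) (a : ℤ) (p q : ℤ → ℝ) (c₁ c₂ : ℝ) (u v w : ℤ → ℝ) (t : ℤ) :
    Lop ν a p q (fun s => u s - (c₁ * v s + c₂ * w s)) t
      = Lop ν a p q u t - (c₁ * Lop ν a p q v t + c₂ * Lop ν a p q w t) := by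
  simp only [Lop, caputo_lin]; ring

lemma caputo_zero_of_vanish (ν : ℝ) (a : ℤ) (y : ℤ → ℝ) (t : ℤ)
    (hv : ∀ s, a ≤ s → s ≤ t → y s = 0) : caputo ν a y t = 0 := by
  apply Finset.sum_eq_zero
  intro τ hτ
  rw [Finset.mem_Icc] at hτ
  have h1 : y τ = 0 := hv τ (by omega) hτ.2
  have h2 : y (τ - 1) = 0 := hv (τ - 1) (by omega) (by omega)
  simp [nabla, h1, h2]

lemma caputo_succ_of_vanish (ν : ℝ) (hν1 : ν < 1) (a : ℤ) (y : ℤ → ℝ) (t : ℤ)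
    (ht : a ≤ t) (hv : ∀ s, a ≤ s → s ≤ t → y s = 0) :
    caputo ν a y (t + 1) = y (t + 1) := by
  have hins : Finset.Icc (a + 1) (t + 1) = insert (t + 1) (Finset.Icc (a + 1) t) := by
    ext s; simp only [Finset.mem_Icc, Finset.mem_insert]; omega
  have hnm : (t + 1) ∉ Finset.Icc (a + 1) t := by simp
  rw [caputo, hins, Finset.sum_insert hnm]
  have h0 : ∑ τ ∈ Finset.Icc (a + 1) t,
      rise ((t + 1 - τ + 1 : ℤ) : ℝ) (-ν) / Real.Gamma (1 - ν) * nabla y τ = 0 := by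
    apply Finset.sum_eq_zero
    intro τ hτ
    rw [Finset.mem_Icc] at hτ
    have h1 : y τ = 0 := hv τ (by omega) hτ.2
    have h2 : y (τ - 1) = 0 := hv (τ - 1) (by omega) (by omega)
    simp [nabla, h1, h2]
  rw [h0, add_zero]
  have e1 : (t + 1 - (t + 1) + 1 : ℤ) = 1 := by ring
  rw [e1]
  have hg : Real.Gamma (1 - ν) ≠ 0 := (Real.Gamma_pos_of_pos (by linarith)).ne'
  have : rise ((1 : ℤ) : ℝ) (-ν) = Real.Gamma (1 - ν) := by
    simp [rise, Real.Gamma_one]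
    norm_num [sub_eq_add_neg]
  rw [this, div_self hg, one_mul, nabla]
  rw [show (t + 1 - 1 : ℤ) = t by ring, hv t ht le_rfl, sub_zero]

lemma vanish (ν : ℝ) (hν1 : ν < 1) (a : ℤ) (p q : ℤ → ℝ)
    (hp : ∀ t, a + 1 ≤ t → 0 < p t) (y : ℤ → ℝ)
    (hy : ∀ t, a + 1 ≤ t → Lop ν a p q y t = 0)
    (h0 : y a = 0) (h1 : y (a + 1) = 0) : ∀ t, a ≤ t → y t = 0 := by
  have key : ∀ t, a ≤ t → ∀ s, a ≤ s → s ≤ t → y s = 0 := by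
    refine Int.le_induction ?_ ?_
    · intro s hs hs'; have : s = a := le_antisymm hs' hs; rw [this]; exact h0
    · intro n hn ih s hs hs'
      rcases lt_or_eq_of_le hs' with h | h
      · exact ih s hs (by omega)
      · subst h
        rcases lt_or_eq_of_le hn with hn' | hn'
        · have heq := hy n (by omega)
          have hc1 : caputo ν a y n = 0 := caputo_zero_of_vanish ν a y n ih
          have hc2 : caputo ν a y (n + 1) = y (n + 1) :=
            caputo_succ_of_vanish ν hν1 a y n hn ih
          rw [Lop, hc1, hc2, ih n hn le_rfl] at heq
          have hpn : 0 < p (n + 1) := hp (n + 1) (by omega)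
          have : p (n + 1) * y (n + 1) = 0 := by linarith
          exact (mul_eq_zero.mp this).resolve_left hpn.ne'
        · rw [← hn']; exact h1
  exact fun t ht => key t ht t ht le_rfl

theorem general_solution_homogeneous (ν : ℝ) (hν : 0 < ν) (hν1 : ν < 1) (a : ℤ)
    (p q : ℤ → ℝ) (hp : ∀ t, a + 1 ≤ t → 0 < p t) (x₁ x₂ : ℤ → ℝ)
    (h1 : ∀ t, a + 1 ≤ t → Lop ν a p q x₁ t = 0)
    (h2 : ∀ t, a + 1 ≤ t → Lop ν a p q x₂ t = 0)
    (hli : (∀ c : ℝ, ∃ t, a ≤ t ∧ x₁ t ≠ c * x₂ t) ∧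
           (∀ c : ℝ, ∃ t, a ≤ t ∧ x₂ t ≠ c * x₁ t))
    (x : ℤ → ℝ) (hx : ∀ t, a + 1 ≤ t → Lop ν a p q x t = 0) :
    ∃! c : ℝ × ℝ, ∀ t, a ≤ t → x t = c.1 * x₁ t + c.2 * x₂ t := by
  obtain ⟨hli1, hli2⟩ := hli
  -- the "Wronskian" of initial data is nonzero
  have hD : x₁ a * x₂ (a + 1) - x₁ (a + 1) * x₂ a ≠ 0 := by
    intro hD
    by_cases hB : x₂ a = 0 ∧ x₂ (a + 1) = 0
    · obtain ⟨t, ht, hne⟩ := hli2 0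
      have := vanish ν hν1 a p q hp x₂ h2 hB.1 hB.2 t ht
      exact hne (by rw [this]; ring)
    · obtain ⟨c, hca, hca1⟩ : ∃ c : ℝ, x₁ a = c * x₂ a ∧ x₁ (a + 1) = c * x₂ (a + 1) := by
        by_cases hB0 : x₂ a = 0
        · have hB1 : x₂ (a + 1) ≠ 0 := fun h => hB ⟨hB0, h⟩
          refine ⟨x₁ (a + 1) / x₂ (a + 1), ?_, by field_simp⟩
          have h0 : x₁ a * x₂ (a + 1) = 0 := by rw [hB0] at hD; linarith
          rw [hB0, mul_zero]
          exact (mul_eq_zero.mp h0).resolve_right hB1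
        · refine ⟨x₁ a / x₂ a, by field_simp, ?_⟩
          field_simp
          nlinarith [hD]
      set y : ℤ → ℝ := fun s => x₁ s - (c * x₂ s + 0 * x₂ s) with hy
      have hLy : ∀ t, a + 1 ≤ t → Lop ν a p q y t = 0 := by
        intro t ht; rw [hy, Lop_lin, h1 t ht, h2 t ht]; ring
      have hya : y a = 0 := by simp only [hy]; rw [hca]; ring
      have hya1 : y (a + 1) = 0 := by simp only [hy]; rw [hca1]; ring
      obtain ⟨t, ht, hne⟩ := hli1 c
      have hv := vanish ν hν1 a p q hp y hLy hya hya1 t ht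
      simp only [hy] at hv
      apply hne; linarith
  set D := x₁ a * x₂ (a + 1) - x₁ (a + 1) * x₂ a with hDdef
  set c₁ : ℝ := (x a * x₂ (a + 1) - x (a + 1) * x₂ a) / D with hc₁
  set c₂ : ℝ := (x₁ a * x (a + 1) - x₁ (a + 1) * x a) / D with hc₂
  have hsol : ∀ t, a ≤ t → x t = c₁ * x₁ t + c₂ * x₂ t := by
    set y : ℤ → ℝ := fun s => x s - (c₁ * x₁ s + c₂ * x₂ s) with hy
    have hLy : ∀ t, a + 1 ≤ t → Lop ν a p q y t = 0 := by
      intro t ht; rw [hy, Lop_lin, hx t ht, h1 t ht, h2 t ht]; ring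
    have hya : y a = 0 := by
      simp only [hy, hc₁, hc₂]; field_simp; ring
    have hya1 : y (a + 1) = 0 := by
      simp only [hy, hc₁, hc₂]; field_simp; ring
    intro t ht
    have hv := vanish ν hν1 a p q hp y hLy hya hya1 t ht
    simp only [hy] at hv; linarith
  refine ⟨(c₁, c₂), hsol, ?_⟩
  rintro ⟨d₁, d₂⟩ hd
  have heq : ∀ t, a ≤ t → d₁ * x₁ t + d₂ * x₂ t = c₁ * x₁ t + c₂ * x₂ t := by
    intro t ht; rw [← hd t ht, ← hsol t ht]
  have hd1 : d₁ = c₁ := by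
    by_contra hne
    obtain ⟨t, ht, hne'⟩ := hli1 ((c₂ - d₂) / (d₁ - c₁))
    apply hne'
    have h := heq t ht
    have hsub : d₁ - c₁ ≠ 0 := sub_ne_zero.mpr hne
    field_simp
    nlinarith [h]
  have hd2 : d₂ = c₂ := by
    by_contra hne
    obtain ⟨t, ht, hne'⟩ := hli2 0
    apply hne'
    have h := heq t ht
    rw [hd1] at h
    have : x₂ t = 0 := by
      have hsub : d₂ - c₂ ≠ 0 := sub_ne_zero.mpr hne
      have : (d₂ - c₂) * x₂ t = 0 := by linarith
      exact (mul_eq_zero.mp this).resolve_left hsub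
    rw [this]; ring
  rw [hd1, hd2]
end

section
/- If x₁, x₂ are linearly independent solutions of L_a x = 0 and y₀ is a particular solution of L_a x = h, then every solution of L_a x(t) = h(t) on ℕ_{a+1} has the form x(t) = c₁x₁(t) + c₂x₂(t) + y₀(t) for some constants c₁, c₂ ∈ ℝ. -/
open Finset

lemma caputo_comb (ν : ℝ) (a t : ℤ) (c₁ c₂ : ℝ) (u v w y : ℤ → ℝ) :
    caputo ν a (fun s => y s - c₁ * u s - c₂ * v s - w s) t
      = caputo ν a y t - c₁ * caputo ν a u t - c₂ * caputo ν a v t - caputo ν a w t := by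
  unfold caputo nabla
  simp only [Finset.mul_sum, ← Finset.sum_sub_distrib]
  exact Finset.sum_congr rfl fun τ _ => by ring

lemma Lop_comb (ν : ℝ) (a : ℤ) (p q : ℤ → ℝ) (t : ℤ) (c₁ c₂ : ℝ) (u v w y : ℤ → ℝ) :
    Lop ν a p q (fun s => y s - c₁ * u s - c₂ * v s - w s) t
      = Lop ν a p q y t - c₁ * Lop ν a p q u t - c₂ * Lop ν a p q v t - Lop ν a p q w t := by
  unfold Lop
  rw [caputo_comb, caputo_comb]
  ring

lemma caputo_zero_of (ν : ℝ) (a t : ℤ) (z : ℤ → ℝ)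
    (hz : ∀ τ, a ≤ τ → τ ≤ t → z τ = 0) : caputo ν a z t = 0 := by
  unfold caputo
  apply Finset.sum_eq_zero
  intro τ hτ
  simp only [Finset.mem_Icc] at hτ
  have h1 : z τ = 0 := hz τ (by omega) hτ.2
  have h2 : z (τ - 1) = 0 := hz (τ - 1) (by omega) (by omega)
  simp [nabla, h1, h2]

lemma caputo_top (ν : ℝ) (hν1 : ν < 1) (a t : ℤ) (z : ℤ → ℝ) (ht : a ≤ t)
    (hz : ∀ τ, a ≤ τ → τ ≤ t → z τ = 0) : caputo ν a z (t + 1) = z (t + 1) := by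
  have hΓ : Real.Gamma (1 - ν) ≠ 0 := ne_of_gt (Real.Gamma_pos_of_pos (by linarith))
  unfold caputo
  have hins : Finset.Icc (a + 1) (t + 1) = insert (t + 1) (Finset.Icc (a + 1) t) := by
    ext τ; simp only [Finset.mem_Icc, Finset.mem_insert]; omega
  rw [hins, Finset.sum_insert (by simp only [Finset.mem_Icc]; omega)]
  rw [add_comm, Finset.sum_eq_zero]
  · have : ((t + 1 - (t + 1) + 1 : ℤ) : ℝ) = 1 := by push_cast; ring
    rw [this]
    have hzt : z (t + 1 - 1) = 0 := by
      have : t + 1 - 1 = t := by ring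
      rw [this]; exact hz t ht le_rfl
    have hztt : z t = 0 := hz t ht le_rfl
    simp only [rise, nabla, Real.Gamma_one, div_one]
    rw [show (1 : ℝ) + -ν = 1 - ν by ring, div_self hΓ, show t + 1 - 1 = t by ring, hztt]
    ring
  · intro τ hτ
    simp only [Finset.mem_Icc] at hτ
    have h1 : z τ = 0 := hz τ (by omega) (by omega)
    have h2 : z (τ - 1) = 0 := hz (τ - 1) (by omega) (by omega)
    simp [nabla, h1, h2]

lemma zero_of_init (ν : ℝ) (hν1 : ν < 1) (a : ℤ) (p q : ℤ → ℝ)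
    (hp : ∀ t, a + 1 ≤ t → 0 < p t) (z : ℤ → ℝ)
    (hz : ∀ t, a + 1 ≤ t → Lop ν a p q z t = 0)
    (h0 : z a = 0) (h1 : z (a + 1) = 0) : ∀ t, a ≤ t → z t = 0 := by
  have key : ∀ n : ℕ, ∀ τ, a ≤ τ → τ ≤ a + n → z τ = 0 := by
    intro n
    induction n with
    | zero =>
      intro τ h₁ h₂
      have hτ : τ = a := by omega
      subst hτ; exact h0
    | succ n ih =>
      intro τ h₁ h₂
      by_cases hc : τ ≤ a + n
      · exact ih τ h₁ hc
      · have hτ : τ = a + n + 1 := by omega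
        rcases Nat.eq_zero_or_pos n with hn | hn
        · subst hn; rw [hτ]; simpa using h1
        · set t := a + (n : ℤ) with hts
          have hat : a + 1 ≤ t := by omega
          have hL := hz t hat
          unfold Lop at hL
          rw [caputo_zero_of ν a t z (fun τ h₁ h₂ => ih τ h₁ (by omega)),
              caputo_top ν hν1 a t z (by omega) (fun τ h₁ h₂ => ih τ h₁ (by omega)),
              ih t (by omega) (by omega)] at hL
          have hpt : p (t + 1) ≠ 0 := ne_of_gt (hp (t + 1) (by omega))
          have hmul : p (t + 1) * z (t + 1) = 0 := by linarith [hL]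
          have hz1 : z (t + 1) = 0 := by
            rcases mul_eq_zero.mp hmul with hc | hc
            · exact absurd hc hpt
            · exact hc
          rw [hτ]; rw [hts] at hz1; convert hz1 using 2
  intro t ht
  exact key (t - a).toNat t ht (by omega)

lemma Lop_zero_fn (ν : ℝ) (a : ℤ) (p q : ℤ → ℝ) (t : ℤ) :
    Lop ν a p q (fun _ => (0 : ℝ)) t = 0 := by
  unfold Lop
  rw [caputo_zero_of ν a (t + 1) _ (fun _ _ _ => rfl),
      caputo_zero_of ν a t _ (fun _ _ _ => rfl)]
  ring


theorem general_solution_nonhomogeneous (ν : ℝ) (hν : 0 < ν) (hν1 : ν < 1) (a : ℤ)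
    (p q h : ℤ → ℝ) (hp : ∀ t, a + 1 ≤ t → 0 < p t) (x₁ x₂ y₀ : ℤ → ℝ)
    (h1 : ∀ t, a + 1 ≤ t → Lop ν a p q x₁ t = 0)
    (h2 : ∀ t, a + 1 ≤ t → Lop ν a p q x₂ t = 0)
    (hli : (∀ c : ℝ, ∃ t, a ≤ t ∧ x₁ t ≠ c * x₂ t) ∧
           (∀ c : ℝ, ∃ t, a ≤ t ∧ x₂ t ≠ c * x₁ t))
    (hy₀ : ∀ t, a + 1 ≤ t → Lop ν a p q y₀ t = h t)
    (x : ℤ → ℝ) (hx : ∀ t, a + 1 ≤ t → Lop ν a p q x t = h t) :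
    ∃ c₁ c₂ : ℝ, ∀ t, a ≤ t → x t = c₁ * x₁ t + c₂ * x₂ t + y₀ t := by
  -- Casoratian at a is nonzero
  set W : ℝ := x₁ a * x₂ (a + 1) - x₁ (a + 1) * x₂ a with hWdef
  have hW : W ≠ 0 := by
    intro hW0
    by_cases h2a : x₂ a = 0
    · by_cases h2b : x₂ (a + 1) = 0
      · -- x₂ vanishes identically, contradicting independence
        set z : ℤ → ℝ := fun s => x₂ s - (0 : ℝ) * x₁ s - (0 : ℝ) * x₁ s - (fun _ => (0:ℝ)) s
          with hzdef
        have hzL : ∀ t, a + 1 ≤ t → Lop ν a p q z t = 0 := by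
          intro t ht
          rw [hzdef, Lop_comb, h2 t ht, Lop_zero_fn]
          ring
        have hz0 : ∀ t, a ≤ t → z t = 0 :=
          zero_of_init ν hν1 a p q hp z hzL (by simp [hzdef, h2a]) (by simp [hzdef, h2b])
        obtain ⟨t, ht, hne⟩ := hli.2 0
        exact hne (by have := hz0 t ht; simp [hzdef] at this; simp [this])
      · -- use c = x₁(a+1)/x₂(a+1)
        set c : ℝ := x₁ (a + 1) / x₂ (a + 1) with hcdef
        set z : ℤ → ℝ := fun s => x₁ s - c * x₂ s - (0 : ℝ) * x₂ s - (fun _ => (0:ℝ)) s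
          with hzdef
        have hzL : ∀ t, a + 1 ≤ t → Lop ν a p q z t = 0 := by
          intro t ht
          rw [hzdef, Lop_comb, h1 t ht, h2 t ht, Lop_zero_fn]
          ring
        have hza : z a = 0 := by
          simp only [hzdef, hcdef]
          field_simp
          rw [hWdef] at hW0
          linarith
        have hzb : z (a + 1) = 0 := by
          simp only [hzdef, hcdef]
          field_simp
          ring
        have hz0 : ∀ t, a ≤ t → z t = 0 := zero_of_init ν hν1 a p q hp z hzL hza hzb
        obtain ⟨t, ht, hne⟩ := hli.1 c
        have := hz0 t ht
        simp only [hzdef] at this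
        exact hne (by linarith)
    · -- use c = x₁ a / x₂ a
      set c : ℝ := x₁ a / x₂ a with hcdef
      set z : ℤ → ℝ := fun s => x₁ s - c * x₂ s - (0 : ℝ) * x₂ s - (fun _ => (0:ℝ)) s
        with hzdef
      have hzL : ∀ t, a + 1 ≤ t → Lop ν a p q z t = 0 := by
        intro t ht
        rw [hzdef, Lop_comb, h1 t ht, h2 t ht, Lop_zero_fn]
        ring
      have hza : z a = 0 := by
        simp only [hzdef, hcdef]
        field_simp
        ring
      have hzb : z (a + 1) = 0 := by
        simp only [hzdef, hcdef]
        field_simp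
        rw [hWdef] at hW0
        linarith
      have hz0 : ∀ t, a ≤ t → z t = 0 := zero_of_init ν hν1 a p q hp z hzL hza hzb
      obtain ⟨t, ht, hne⟩ := hli.1 c
      have := hz0 t ht
      simp only [hzdef] at this
      exact hne (by linarith)
  -- choose constants matching the initial data of x - y₀
  set c₁ : ℝ := ((x a - y₀ a) * x₂ (a + 1) - (x (a + 1) - y₀ (a + 1)) * x₂ a) / W with hc1
  set c₂ : ℝ := (x₁ a * (x (a + 1) - y₀ (a + 1)) - x₁ (a + 1) * (x a - y₀ a)) / W with hc2
  refine ⟨c₁, c₂, ?_⟩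
  set z : ℤ → ℝ := fun s => x s - c₁ * x₁ s - c₂ * x₂ s - y₀ s with hzdef
  have hzL : ∀ t, a + 1 ≤ t → Lop ν a p q z t = 0 := by
    intro t ht
    rw [hzdef, Lop_comb, hx t ht, h1 t ht, h2 t ht, hy₀ t ht]
    ring
  have hza : z a = 0 := by
    simp only [hzdef, hc1, hc2]
    field_simp
    rw [hWdef]
    ring
  have hzb : z (a + 1) = 0 := by
    simp only [hzdef, hc1, hc2]
    field_simp
    rw [hWdef]
    ring
  have hz0 : ∀ t, a ≤ t → z t = 0 := zero_of_init ν hν1 a p q hp z hzL hza hzb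
  intro t ht
  have := hz0 t ht
  simp only [hzdef] at this
  linarith
end

section
/- Let x(t,s) be the Cauchy function for L_a, i.e., for each fixed s ∈ ℕ_a, t ↦ x(t,s) satisfies L_s x(·,s) = 0 on ℕ_{s+1}, x(s,s) = 0, and ∇x(s+1,s) = 1/p(s+1). Then y(t) := Σ_{s=a+1}^{t} x(t,s)h(s) solves the IVP L_a y(t) = h(t) for t ∈ ℕ_{a+1}, y(a) = 0, ∇y(a+1) = 0. -/
open Finset

theorem variation_of_constants (ν : ℝ) (hν : 0 < ν) (hν1 : ν < 1) (a : ℤ)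
    (p q h : ℤ → ℝ) (hp : ∀ t, a + 1 ≤ t → 0 < p t)
    (x : ℤ → ℤ → ℝ)
    (hC : ∀ s, a ≤ s →
      (∀ t, s + 1 ≤ t → Lop ν s p q (fun τ => x τ s) t = 0) ∧
      x s s = 0 ∧ nabla (fun τ => x τ s) (s + 1) = 1 / p (s + 1))
    (y : ℤ → ℝ) (hy : ∀ t, y t = ∑ s ∈ Finset.Icc (a + 1) t, x t s * h s) :
    y a = 0 ∧ nabla y (a + 1) = 0 ∧ ∀ t, a + 1 ≤ t → Lop ν a p q y t = h t := by
  have hxdiag : ∀ s, a ≤ s → x s s = 0 := fun s hs => (hC s hs).2.1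
  have hy0 : y a = 0 := by
    rw [hy]
    rw [Finset.Icc_eq_empty (by omega), Finset.sum_empty]
  -- nabla of y in terms of nabla of x
  have hnab : ∀ τ, a + 1 ≤ τ →
      nabla y τ = ∑ s ∈ Icc (a + 1) (τ - 1), nabla (fun u => x u s) τ * h s := by
    intro τ hτ
    have hins : Icc (a + 1) τ = insert τ (Icc (a + 1) (τ - 1)) := by
      ext z; simp only [mem_insert, mem_Icc]; omega
    have hnotmem : τ ∉ Icc (a + 1) (τ - 1) := by simp only [mem_Icc]; omega
    unfold nabla
    rw [hy τ, hy (τ - 1), hins, Finset.sum_insert hnotmem,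
        hxdiag τ (by omega), zero_mul, zero_add, ← Finset.sum_sub_distrib]
    apply Finset.sum_congr rfl
    intro s hs
    simp only [nabla]; ring
  -- key interchange of summation
  have key : ∀ T : ℤ, caputo ν a y T
      = ∑ s ∈ Icc (a + 1) T, caputo ν s (fun τ => x τ s) T * h s := by
    intro T
    unfold caputo
    have step1 : ∀ τ ∈ Icc (a + 1) T,
        rise ((T - τ + 1 : ℤ) : ℝ) (-ν) / Real.Gamma (1 - ν) * nabla y τ
        = ∑ s ∈ Icc (a + 1) T, (if s + 1 ≤ τ then
            rise ((T - τ + 1 : ℤ) : ℝ) (-ν) / Real.Gamma (1 - ν)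
              * nabla (fun u => x u s) τ * h s else 0) := by
      intro τ hτ
      simp only [mem_Icc] at hτ
      rw [hnab τ hτ.1, Finset.mul_sum, ← Finset.sum_filter]
      have hfil : (Icc (a + 1) T).filter (fun s => s + 1 ≤ τ) = Icc (a + 1) (τ - 1) := by
        ext z; simp only [mem_filter, mem_Icc]; omega
      rw [hfil]
      apply Finset.sum_congr rfl
      intro s _; ring
    rw [Finset.sum_congr rfl step1, Finset.sum_comm]
    apply Finset.sum_congr rfl
    intro s hs
    simp only [mem_Icc] at hs
    rw [← Finset.sum_filter]
    have hfil : (Icc (a + 1) T).filter (fun τ => s + 1 ≤ τ) = Icc (s + 1) T := by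
      ext z; simp only [mem_filter, mem_Icc]; omega
    rw [hfil, Finset.sum_mul]
  have hGamma_ne : Real.Gamma (1 - ν) ≠ 0 := (Real.Gamma_pos_of_pos (by linarith)).ne'
  have hC1 : ∀ t : ℤ, caputo ν t (fun τ => x τ t) t = 0 := by
    intro t; unfold caputo
    rw [Finset.Icc_eq_empty (by omega), Finset.sum_empty]
  have hCstep : ∀ t : ℤ, a ≤ t → caputo ν t (fun τ => x τ t) (t + 1) = 1 / p (t + 1) := by
    intro t ht
    unfold caputo
    rw [Finset.Icc_self, Finset.sum_singleton]
    have h1 : ((t + 1 - (t + 1) + 1 : ℤ) : ℝ) = 1 := by push_cast; ring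
    rw [h1]
    have h2 : rise 1 (-ν) = Real.Gamma (1 - ν) := by
      unfold rise
      rw [Real.Gamma_one, div_one, show (1 : ℝ) + -ν = 1 - ν by ring]
    rw [h2, (hC t ht).2.2, div_self hGamma_ne, one_mul]
  have hnab0 : nabla y (a + 1) = 0 := by
    unfold nabla
    rw [hy, hy, show a + 1 - 1 = a by ring, Finset.Icc_self, Finset.sum_singleton,
        Finset.Icc_eq_empty (by omega), Finset.sum_empty, hxdiag (a + 1) (by omega),
        zero_mul, sub_zero]
  refine ⟨hy0, hnab0, ?_⟩
  intro t ht
  unfold Lop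
  rw [key (t + 1), key t, hy t]
  have hins : Icc (a + 1) (t + 1) = insert (t + 1) (Icc (a + 1) t) := by
    ext z; simp only [mem_insert, mem_Icc]; omega
  have hnotmem : t + 1 ∉ Icc (a + 1) t := by simp only [mem_Icc]; omega
  rw [hins, Finset.sum_insert hnotmem, hC1 (t + 1), zero_mul, zero_add]
  have step : p (t + 1) * (∑ s ∈ Icc (a + 1) t, caputo ν s (fun τ => x τ s) (t + 1) * h s)
      - p t * (∑ s ∈ Icc (a + 1) t, caputo ν s (fun τ => x τ s) t * h s)
      + q t * (∑ s ∈ Icc (a + 1) t, x t s * h s)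
      = ∑ s ∈ Icc (a + 1) t, Lop ν s p q (fun τ => x τ s) t * h s := by
    rw [Finset.mul_sum, Finset.mul_sum, Finset.mul_sum, ← Finset.sum_sub_distrib,
        ← Finset.sum_add_distrib]
    apply Finset.sum_congr rfl
    intro s _
    unfold Lop; ring
  rw [step]
  have hins2 : Icc (a + 1) t = insert t (Icc (a + 1) (t - 1)) := by
    ext z; simp only [mem_insert, mem_Icc]; omega
  have hnotmem2 : t ∉ Icc (a + 1) (t - 1) := by simp only [mem_Icc]; omega
  rw [hins2, Finset.sum_insert hnotmem2]
  have h0 : ∑ s ∈ Icc (a + 1) (t - 1), Lop ν s p q (fun τ => x τ s) t * h s = 0 := by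
    apply Finset.sum_eq_zero
    intro s hs
    simp only [mem_Icc] at hs
    rw [(hC s (by omega)).1 t (by omega)]; ring
  have hLt : Lop ν t p q (fun τ => x τ t) t = 1 := by
    unfold Lop
    rw [hCstep t (by omega), hC1 t]
    simp only []
    rw [hxdiag t (by omega)]
    have hpne : p (t + 1) ≠ 0 := (hp (t + 1) (by omega)).ne'
    field_simp
    ring
  rw [h0, hLt, add_zero, one_mul]
end

section
/- The Cauchy function for the equation ∇[p(t+1)∇_{s*}^ν x(t+1)] = 0 is x(t,s) = ∇_s^{-ν}(1/p)(t) = Σ_{τ=s+1}^{t} (t-τ+1)^{↑(ν-1)}/Γ(ν) · (1/p(τ)); that is, for each fixed s, this function satisfies ∇[p(t+1)∇_{s*}^ν x(t+1,s)] = 0 for t ∈ ℕ_{s+1}, x(s,s)=0, and ∇x(s+1,s) = 1/p(s+1). -/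
open Finset

open scoped Nat

namespace CauchyAux

noncomputable def P (n : ℕ) (x : ℝ) : ℝ := ∏ k ∈ Finset.range n, (x + k)

lemma P_zero (x : ℝ) : P 0 x = 1 := by simp [P]

lemma P_succ (n : ℕ) (x : ℝ) : P (n+1) x = P n x * (x + n) := Finset.prod_range_succ _ _

lemma P_one (n : ℕ) : P n 1 = (n ! : ℝ) := by
  induction n with
  | zero => simp [P]
  | succ n ih =>
    rw [P_succ, ih, Nat.factorial_succ]
    push_cast; ring

lemma vandermonde (x y : ℝ) (n : ℕ) :
    ∑ i ∈ range (n+1), (n.choose i : ℝ) * (P i x * P (n-i) y) = P n (x+y) := by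
  induction n with
  | zero => simp [P]
  | succ n ih =>
    have hsplit : ∑ i ∈ range (n+2), ((n+1).choose i : ℝ) * (P i x * P (n+1-i) y)
        = P (n+1) y + ∑ i ∈ range (n+1), ((n+1).choose (i+1) : ℝ) * (P (i+1) x * P (n-i) y) := by
      rw [Finset.sum_range_succ' (fun i => ((n+1).choose i : ℝ) * (P i x * P (n+1-i) y)) (n+1)]
      simp [P_zero, add_comm]
    have hB : ∑ i ∈ range (n+1), (n.choose (i+1) : ℝ) * (P (i+1) x * P (n-i) y)
        = (∑ j ∈ range (n+1), (n.choose j : ℝ) * (P j x * P (n+1-j) y)) - P (n+1) y := by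
      have h1 : ∑ j ∈ range (n+2), (n.choose j : ℝ) * (P j x * P (n+1-j) y)
          = P (n+1) y + ∑ i ∈ range (n+1), (n.choose (i+1) : ℝ) * (P (i+1) x * P (n-i) y) := by
        rw [Finset.sum_range_succ' (fun j => (n.choose j : ℝ) * (P j x * P (n+1-j) y)) (n+1)]
        simp [P_zero, add_comm]
      have h2 : ∑ j ∈ range (n+2), (n.choose j : ℝ) * (P j x * P (n+1-j) y)
          = ∑ j ∈ range (n+1), (n.choose j : ℝ) * (P j x * P (n+1-j) y) := by
        rw [Finset.sum_range_succ]
        simp [Nat.choose_succ_self]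
      rw [h2] at h1; linarith
    rw [hsplit]
    have hP : ∀ i ∈ range (n+1), ((n+1).choose (i+1) : ℝ) * (P (i+1) x * P (n-i) y)
        = (n.choose i : ℝ) * (P (i+1) x * P (n-i) y) + (n.choose (i+1) : ℝ) * (P (i+1) x * P (n-i) y) := by
      intro i _
      rw [Nat.choose_succ_succ]
      push_cast; ring
    rw [Finset.sum_congr rfl hP, Finset.sum_add_distrib, hB]
    have key : (∑ i ∈ range (n+1), (n.choose i : ℝ) * (P (i+1) x * P (n-i) y))
        + (∑ j ∈ range (n+1), (n.choose j : ℝ) * (P j x * P (n+1-j) y))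
        = (x + y + n) * P n (x+y) := by
      rw [← ih, Finset.mul_sum, ← Finset.sum_add_distrib]
      apply Finset.sum_congr rfl
      intro i hi
      have hin : i ≤ n := Nat.lt_succ_iff.mp (Finset.mem_range.mp hi)
      have h1 : P (i+1) x = P i x * (x + i) := P_succ i x
      have h2 : P (n+1-i) y = P (n-i) y * (y + (n-i : ℕ)) := by
        have : n+1-i = (n-i)+1 := by omega
        rw [this, P_succ]
      have h3 : ((n-i : ℕ) : ℝ) = (n : ℝ) - i := by
        push_cast [Nat.cast_sub hin]; ring
      rw [h1, h2, h3]; ring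
    rw [P_succ n (x+y)]
    linarith [key]

lemma conv_nat (ν : ℝ) (N : ℕ) :
    ∑ i ∈ range (N+1), (P (N-i) (1-ν) / ((N-i)! : ℝ)) * (P i ν / (i ! : ℝ)) = 1 := by
  have hvd := vandermonde ν (1-ν) N
  have hone : ν + (1-ν) = 1 := by ring
  rw [hone, P_one] at hvd
  have hNf : (N ! : ℝ) ≠ 0 := Nat.cast_ne_zero.mpr (Nat.factorial_ne_zero N)
  have step : ∀ i ∈ range (N+1), (P (N-i) (1-ν) / ((N-i)! : ℝ)) * (P i ν / (i ! : ℝ))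
      = (N.choose i : ℝ) * (P i ν * P (N-i) (1-ν)) / (N ! : ℝ) := by
    intro i hi
    have hin : i ≤ N := Nat.lt_succ_iff.mp (Finset.mem_range.mp hi)
    have hfac : (N.choose i : ℝ) * i ! * (N-i)! = N ! := by
      exact_mod_cast congrArg (Nat.cast (R := ℝ)) (Nat.choose_mul_factorial_mul_factorial hin)
    have hi0 : (i ! : ℝ) ≠ 0 := Nat.cast_ne_zero.mpr (Nat.factorial_ne_zero i)
    have hi1 : ((N-i)! : ℝ) ≠ 0 := Nat.cast_ne_zero.mpr (Nat.factorial_ne_zero (N-i))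
    field_simp
    rw [← hfac]; ring
  rw [Finset.sum_congr rfl step, ← Finset.sum_div, hvd, div_self hNf]



lemma Gamma_add_nat (x : ℝ) (hx : 0 < x) (n : ℕ) :
    Real.Gamma (x + n) = P n x * Real.Gamma x := by
  induction n with
  | zero => simp [P_zero]
  | succ n ih =>
    have h : x + ((n : ℝ) + 1) = (x + n) + 1 := by ring
    have hne : x + (n : ℝ) ≠ 0 := by positivity
    push_cast
    rw [h, Real.Gamma_add_one hne, ih, P_succ]
    ring

/-- Integer kernel for the fractional sum. -/
noncomputable def Kk (ν : ℝ) (m : ℤ) : ℝ :=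
  if m ≤ 0 then 0 else P (m-1).toNat ν / ((m-1).toNat ! : ℝ)

/-- Integer kernel for the Caputo difference. -/
noncomputable def Ck (ν : ℝ) (m : ℤ) : ℝ :=
  if m ≤ 0 then 0 else P (m-1).toNat (1-ν) / ((m-1).toNat ! : ℝ)

lemma Kk_nonpos (ν : ℝ) {m : ℤ} (h : m ≤ 0) : Kk ν m = 0 := if_pos h

lemma Kk_one (ν : ℝ) : Kk ν 1 = 1 := by simp [Kk, P_zero]

lemma rise_eq_Kk (ν : ℝ) (hν : 0 < ν) {m : ℤ} (hm : 1 ≤ m) :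
    rise ((m : ℤ) : ℝ) (ν - 1) / Real.Gamma ν = Kk ν m := by
  set N : ℕ := (m-1).toNat with hN
  have hmN : (m : ℝ) = (N : ℝ) + 1 := by
    have : m = (N : ℤ) + 1 := by omega
    exact_mod_cast this
  have hΓν : Real.Gamma ν ≠ 0 := ne_of_gt (Real.Gamma_pos_of_pos hν)
  have hNf : ((N ! : ℕ) : ℝ) ≠ 0 := Nat.cast_ne_zero.mpr (Nat.factorial_ne_zero N)
  rw [Kk, if_neg (by omega), rise, hmN]
  have h1 : (N : ℝ) + 1 + (ν - 1) = ν + N := by ring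
  have h2 : Real.Gamma ((N : ℝ) + 1) = (N ! : ℝ) := Real.Gamma_nat_eq_factorial N
  rw [h1, Gamma_add_nat ν hν N, h2]
  have hN' : m.toNat - 1 = N := by omega
  field_simp
  rw [← hN]
  ring

lemma rise_eq_Ck (ν : ℝ) (hν1 : ν < 1) {m : ℤ} (hm : 1 ≤ m) :
    rise ((m : ℤ) : ℝ) (-ν) / Real.Gamma (1 - ν) = Ck ν m := by
  set N : ℕ := (m-1).toNat with hN
  have hmN : (m : ℝ) = (N : ℝ) + 1 := by
    have : m = (N : ℤ) + 1 := by omega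
    exact_mod_cast this
  have hpos : 0 < 1 - ν := by linarith
  have hΓ : Real.Gamma (1-ν) ≠ 0 := ne_of_gt (Real.Gamma_pos_of_pos hpos)
  have hNf : ((N ! : ℕ) : ℝ) ≠ 0 := Nat.cast_ne_zero.mpr (Nat.factorial_ne_zero N)
  rw [Ck, if_neg (by omega), rise, hmN]
  have h1 : (N : ℝ) + 1 + (-ν) = (1 - ν) + N := by ring
  have h2 : Real.Gamma ((N : ℝ) + 1) = (N ! : ℝ) := Real.Gamma_nat_eq_factorial N
  rw [h1, Gamma_add_nat (1-ν) hpos N, h2]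
  have hN' : m.toNat - 1 = N := by omega
  field_simp
  rw [← hN]
  ring

lemma Icc_int_eq_map (a b : ℤ) :
    ∀ g : ℤ → ℝ, ∑ τ ∈ Finset.Icc a b, g τ = ∑ i ∈ range (b + 1 - a).toNat, g (a + i) := by
  intro g
  have hset : Finset.Icc a b
      = (range (b+1-a).toNat).map ⟨fun i : ℕ => a + (i : ℤ), (add_right_injective a).comp Nat.cast_injective⟩ := by
    ext τ
    simp only [Finset.mem_map, Finset.mem_range, Finset.mem_Icc, Function.Embedding.coeFn_mk]
    constructor
    · rintro ⟨h1, h2⟩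
      exact ⟨(τ - a).toNat, by omega, by omega⟩
    · rintro ⟨i, hi, rfl⟩
      omega
  rw [hset, Finset.sum_map]
  rfl

lemma conv_int (ν : ℝ) {w t : ℤ} (hwt : w < t) :
    ∑ τ ∈ Finset.Icc (w+1) t, Ck ν (t-τ+1) * Kk ν (τ-w) = 1 := by
  rw [Icc_int_eq_map]
  obtain ⟨N, hN⟩ : ∃ N : ℕ, (t + 1 - (w+1)).toNat = N + 1 := ⟨(t-w).toNat - 1, by omega⟩
  have hNw : (t - w : ℤ) = (N : ℤ) + 1 := by omega
  rw [hN]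
  have step : ∀ i ∈ range (N+1),
      Ck ν (t - (w + 1 + (i:ℤ)) + 1) * Kk ν ((w + 1 + (i:ℤ)) - w)
      = (P (N-i) (1-ν) / ((N-i)! : ℝ)) * (P i ν / (i ! : ℝ)) := by
    intro i hi
    have hiN : i ≤ N := Nat.lt_succ_iff.mp (Finset.mem_range.mp hi)
    have e1 : t - (w + 1 + (i:ℤ)) + 1 = ((N - i : ℕ) : ℤ) + 1 := by omega
    have e2 : (w + 1 + (i:ℤ)) - w = (i : ℤ) + 1 := by ring
    rw [e1, e2, Ck, Kk, if_neg (by omega), if_neg (by omega)]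
    have e3 : (((N-i:ℕ) : ℤ) + 1 - 1).toNat = N - i := by omega
    have e4 : ((i:ℤ) + 1 - 1).toNat = i := by omega
    rw [e3, e4]
  rw [Finset.sum_congr rfl step]
  exact conv_nat ν N


lemma H_one (ν : ℝ) {s t w : ℤ} (hw : s ≤ w) (hwt : w ≤ t - 1) :
    ∑ τ ∈ Finset.Icc (s+1) t, Ck ν (t-τ+1) * Kk ν (τ-w) = 1 := by
  rw [← conv_int ν (show w < t by omega)]
  apply (Finset.sum_subset ?_ ?_).symm
  · intro τ hτ
    simp only [Finset.mem_Icc] at *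
    omega
  · intro τ hτ h2
    simp only [Finset.mem_Icc, not_and, not_le] at hτ h2
    rw [Kk_nonpos ν (show τ - w ≤ 0 by omega), mul_zero]

lemma H_t (ν : ℝ) (s t : ℤ) :
    ∑ τ ∈ Finset.Icc (s+1) t, Ck ν (t-τ+1) * Kk ν (τ-t) = 0 := by
  apply Finset.sum_eq_zero
  intro τ hτ
  simp only [Finset.mem_Icc] at hτ
  rw [Kk_nonpos ν (by omega), mul_zero]


lemma fsum_eq (ν : ℝ) (hν : 0 < ν) (s : ℤ) (f : ℤ → ℝ) (t : ℤ) :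
    fsum ν s f t = ∑ u ∈ Finset.Icc (s+1) t, Kk ν (t-u+1) * f u := by
  unfold fsum
  apply Finset.sum_congr rfl
  intro u hu
  simp only [Finset.mem_Icc] at hu
  rw [rise_eq_Kk ν hν (show (1:ℤ) ≤ t-u+1 by omega)]

lemma nabla_fsum (ν : ℝ) (hν : 0 < ν) (s : ℤ) (f : ℤ → ℝ) (τ : ℤ) :
    nabla (fsum ν s f) τ
      = ∑ u ∈ Finset.Icc (s+1) τ, (Kk ν (τ-u+1) - Kk ν (τ-u)) * f u := by
  unfold nabla
  rw [fsum_eq ν hν, fsum_eq ν hν]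
  have hext : ∑ u ∈ Finset.Icc (s+1) (τ-1), Kk ν (τ-1-u+1) * f u
      = ∑ u ∈ Finset.Icc (s+1) τ, Kk ν (τ-u) * f u := by
    have heq : ∀ u ∈ Finset.Icc (s+1) (τ-1), Kk ν (τ-1-u+1) * f u = Kk ν (τ-u) * f u := by
      intro u hu
      congr 2
      omega
    rw [Finset.sum_congr rfl heq]
    apply Finset.sum_subset
    · intro u hu
      simp only [Finset.mem_Icc] at *
      omega
    · intro u hu h2
      simp only [Finset.mem_Icc, not_and, not_le] at hu h2
      rw [Kk_nonpos ν (show τ - u ≤ 0 by omega), zero_mul]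
  rw [hext, ← Finset.sum_sub_distrib]
  apply Finset.sum_congr rfl
  intro u hu
  ring

lemma caputo_fsum (ν : ℝ) (hν : 0 < ν) (hν1 : ν < 1) (s : ℤ) (f : ℤ → ℝ)
    {t : ℤ} (ht : s + 1 ≤ t) :
    caputo ν s (fsum ν s f) t = f t := by
  have step1 : caputo ν s (fsum ν s f) t
      = ∑ τ ∈ Finset.Icc (s+1) t, ∑ u ∈ Finset.Icc (s+1) t,
          Ck ν (t-τ+1) * ((Kk ν (τ-u+1) - Kk ν (τ-u)) * f u) := by
    unfold caputo
    apply Finset.sum_congr rfl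
    intro τ hτ
    simp only [Finset.mem_Icc] at hτ
    rw [rise_eq_Ck ν hν1 (show (1:ℤ) ≤ t-τ+1 by omega), nabla_fsum ν hν, ← Finset.mul_sum]
    congr 1
    apply Finset.sum_subset
    · intro u hu
      simp only [Finset.mem_Icc] at *
      omega
    · intro u hu h2
      simp only [Finset.mem_Icc, not_and, not_le] at hu h2
      rw [Kk_nonpos ν (show τ - u + 1 ≤ 0 by omega), Kk_nonpos ν (show τ - u ≤ 0 by omega)]
      ring
  rw [step1, Finset.sum_comm]
  have step2 : ∀ u ∈ Finset.Icc (s+1) t,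
      ∑ τ ∈ Finset.Icc (s+1) t, Ck ν (t-τ+1) * ((Kk ν (τ-u+1) - Kk ν (τ-u)) * f u)
      = (if u = t then (1:ℝ) else 0) * f u := by
    intro u hu
    simp only [Finset.mem_Icc] at hu
    have hexp : ∀ τ ∈ Finset.Icc (s+1) t,
        Ck ν (t-τ+1) * ((Kk ν (τ-u+1) - Kk ν (τ-u)) * f u)
        = (Ck ν (t-τ+1) * Kk ν (τ-(u-1))) * f u - (Ck ν (t-τ+1) * Kk ν (τ-u)) * f u := by
      intro τ hτ
      have h : τ - u + 1 = τ - (u-1) := by ring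
      rw [← h]
      ring
    rw [Finset.sum_congr rfl hexp, Finset.sum_sub_distrib, ← Finset.sum_mul, ← Finset.sum_mul]
    by_cases hut : u = t
    · subst hut
      rw [H_one ν (show s ≤ u - 1 by omega) (by omega), H_t ν s u, if_pos rfl]
      ring
    · rw [H_one ν (show s ≤ u - 1 by omega) (by omega),
        H_one ν (show s ≤ u by omega) (by omega), if_neg hut]
      ring
  rw [Finset.sum_congr rfl step2]
  have hif : ∀ u ∈ Finset.Icc (s+1) t,
      (if u = t then (1:ℝ) else 0) * f u = if u = t then f u else 0 := by
    intro u _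
    split <;> simp
  rw [Finset.sum_congr rfl hif, Finset.sum_ite_eq' (Finset.Icc (s+1) t) t (fun u => f u),
    if_pos (Finset.mem_Icc.mpr ⟨ht, le_refl t⟩)]

end CauchyAux

theorem cauchy_function_selfadjoint (ν : ℝ) (hν : 0 < ν) (hν1 : ν < 1) (s : ℤ)
    (p : ℤ → ℝ) (hp : ∀ t, s + 1 ≤ t → 0 < p t) :
    (∀ t, s + 1 ≤ t →
      p (t + 1) * caputo ν s (fsum ν s (fun τ => 1 / p τ)) (t + 1)
        - p t * caputo ν s (fsum ν s (fun τ => 1 / p τ)) t = 0) ∧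
    fsum ν s (fun τ => 1 / p τ) s = 0 ∧
    nabla (fsum ν s (fun τ => 1 / p τ)) (s + 1) = 1 / p (s + 1) := by
  obtain ⟨h2, h3⟩ : fsum ν s (fun τ => 1 / p τ) s = 0 ∧
      nabla (fsum ν s (fun τ => 1 / p τ)) (s + 1) = 1 / p (s + 1) := by
    constructor
    · unfold fsum
      rw [Finset.Icc_eq_empty (by omega), Finset.sum_empty]
    · rw [CauchyAux.nabla_fsum ν hν s _ (s+1)]
      rw [show Finset.Icc (s+1) (s+1) = {s+1} from Finset.Icc_self (s+1),
        Finset.sum_singleton]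
      rw [show (s+1) - (s+1) + 1 = (1:ℤ) by ring, show (s+1) - (s+1) = (0:ℤ) by ring,
        CauchyAux.Kk_one ν, CauchyAux.Kk_nonpos ν (le_refl 0)]
      ring
  refine ⟨?_, h2, h3⟩
  intro t ht
  rw [CauchyAux.caputo_fsum ν hν hν1 s _ ht,
    CauchyAux.caputo_fsum ν hν hν1 s _ (by omega : s + 1 ≤ t + 1)]
  have h1 : p (t+1) ≠ 0 := (hp (t+1) (by omega)).ne'
  have h0 : p t ≠ 0 := (hp t ht).ne'
  field_simp
  ring
end

section
/- The Cauchy function for ∇∇_{s*}^ν x(t+1) = 0 is x(t,s) = (t-s)^{↑ν}/Γ(ν+1); i.e., for each fixed s, the function t ↦ (t-s)^{↑ν}/Γ(ν+1) satisfies ∇[∇_{s*}^ν x(t+1,s)] = 0 for t ∈ ℕ_{s+1}, x(s,s) = 0, and ∇x(s+1,s) = 1. -/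
open Finset

section Aux

open Real

lemma aux_Icc_insert_top (a b : ℤ) (h : a ≤ b + 1) :
    Finset.Icc a (b + 1) = insert (b + 1) (Finset.Icc a b) := by
  ext x; simp only [Finset.mem_Icc, Finset.mem_insert]; omega

lemma aux_sum_Icc_shift (s : ℤ) (m : ℕ) (g : ℤ → ℝ) :
    ∑ τ ∈ Finset.Icc (s + 1) (s + 1 + (m : ℤ)), g τ
      = ∑ k ∈ Finset.range (m + 1), g (s + 1 + (k : ℤ)) := by
  induction m with
  | zero => simp
  | succ n ih =>
      have h1 : s + 1 + ((n + 1 : ℕ) : ℤ) = (s + 1 + (n : ℤ)) + 1 := by push_cast; ring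
      rw [h1, aux_Icc_insert_top _ _ (by omega), Finset.sum_insert (by simp),
        Finset.sum_range_succ, ih]
      push_cast
      ring_nf

lemma aux_alg (ν k m A B C D : ℝ) (hk : k ≠ 0) (hm : m + 1 - k ≠ 0)
    (hC : C ≠ 0) (hD : D ≠ 0) :
    (k + ν) * A * B / (k * C * D) - A * ((m + 1 - k - ν) * B) / (C * ((m + 1 - k) * D))
      = ν * (m + 1) * (A * B / (k * C * ((m + 1 - k) * D))) := by
  field_simp
  ring

/-- Telescoping step. -/
lemma aux_Hstep (ν : ℝ) (hν : 0 < ν) (hν1 : ν < 1) (m k : ℕ) (hk : k ≤ m) :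
    Gamma (((k + 1 : ℕ) : ℝ) + ν) * Gamma ((m : ℝ) + 2 - ((k + 1 : ℕ) : ℝ) - ν) /
        (Gamma (((k + 1 : ℕ) : ℝ)) * Gamma ((m : ℝ) + 2 - ((k + 1 : ℕ) : ℝ)))
      - Gamma ((k : ℝ) + ν) * Gamma ((m : ℝ) + 2 - (k : ℝ) - ν) /
        (Gamma ((k : ℝ)) * Gamma ((m : ℝ) + 2 - (k : ℝ)))
    = ν * ((m : ℝ) + 1) *
        (Gamma ((k : ℝ) + ν) * Gamma ((m : ℝ) + 1 - (k : ℝ) - ν) /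
          (Gamma ((k : ℝ) + 1) * Gamma ((m : ℝ) + 2 - (k : ℝ)))) := by
  have hmk : (k : ℝ) ≤ m := by exact_mod_cast hk
  have hknn : (0 : ℝ) ≤ k := Nat.cast_nonneg k
  have h1 : Gamma ((m : ℝ) + 2 - (k : ℝ) - ν)
      = ((m : ℝ) + 1 - k - ν) * Gamma ((m : ℝ) + 1 - k - ν) := by
    have h := Real.Gamma_add_one (show ((m : ℝ) + 1 - k - ν) ≠ 0 by nlinarith)
    rw [show (m : ℝ) + 2 - (k : ℝ) - ν = ((m : ℝ) + 1 - k - ν) + 1 by ring, h]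
  have h2 : Gamma ((m : ℝ) + 2 - (k : ℝ))
      = ((m : ℝ) + 1 - k) * Gamma ((m : ℝ) + 1 - k) := by
    have h := Real.Gamma_add_one (show ((m : ℝ) + 1 - k) ≠ 0 by nlinarith)
    rw [show (m : ℝ) + 2 - (k : ℝ) = ((m : ℝ) + 1 - k) + 1 by ring, h]
  have hg1 : Gamma ((m : ℝ) + 1 - k) ≠ 0 := (Real.Gamma_pos_of_pos (by nlinarith)).ne'
  have hg2 : Gamma ((m : ℝ) + 1 - k - ν) ≠ 0 := (Real.Gamma_pos_of_pos (by nlinarith)).ne'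
  have hg3 : Gamma ((k : ℝ) + ν) ≠ 0 := (Real.Gamma_pos_of_pos (by positivity)).ne'
  have hmk0 : (m : ℝ) + 1 - k ≠ 0 := by nlinarith
  rcases Nat.eq_zero_or_pos k with rfl | hkpos
  · simp only [Nat.cast_zero, Nat.cast_one, Nat.cast_ofNat, zero_add, Nat.zero_add]
    rw [Real.Gamma_zero]
    have hgm1 : Gamma ((m : ℝ) + 1) ≠ 0 := (Real.Gamma_pos_of_pos (by positivity)).ne'
    rw [zero_mul, div_zero, sub_zero, Real.Gamma_one,
      show (1 : ℝ) + ν = ν + 1 by ring, Real.Gamma_add_one hν.ne',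
      show (m : ℝ) + 2 - 1 - ν = (m : ℝ) + 1 - ν by ring,
      show (m : ℝ) + 2 - 1 = (m : ℝ) + 1 by ring,
      show (m : ℝ) + 1 - 0 - ν = (m : ℝ) + 1 - ν by ring,
      show (m : ℝ) + 2 - 0 = ((m : ℝ) + 1) + 1 by ring,
      Real.Gamma_add_one (show ((m : ℝ) + 1) ≠ 0 by positivity)]
    set B := Gamma ((m : ℝ) + 1 - ν)
    set D := Gamma ((m : ℝ) + 1)
    set A := Gamma ν
    field_simp
  · have hkR : (0 : ℝ) < k := by exact_mod_cast hkpos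
    have h3 : Gamma ((k : ℝ) + 1) = k * Gamma k := Real.Gamma_add_one hkR.ne'
    have h4 : Gamma ((k : ℝ) + 1 + ν) = ((k : ℝ) + ν) * Gamma ((k : ℝ) + ν) := by
      have h := Real.Gamma_add_one (show ((k : ℝ) + ν) ≠ 0 by positivity)
      rw [show (k : ℝ) + 1 + ν = ((k : ℝ) + ν) + 1 by ring, h]
    have hg4 : Gamma (k : ℝ) ≠ 0 := (Real.Gamma_pos_of_pos hkR).ne'
    rw [show (((k + 1 : ℕ)) : ℝ) = (k : ℝ) + 1 by push_cast; ring]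
    rw [show (m : ℝ) + 2 - ((k : ℝ) + 1) - ν = (m : ℝ) + 1 - k - ν by ring,
      show (m : ℝ) + 2 - ((k : ℝ) + 1) = (m : ℝ) + 1 - k by ring, h4, h3, h1, h2]
    exact aux_alg ν (k : ℝ) (m : ℝ) (Gamma ((k : ℝ) + ν)) (Gamma ((m : ℝ) + 1 - k - ν))
      (Gamma (k : ℝ)) (Gamma ((m : ℝ) + 1 - k)) hkR.ne' hmk0 hg4 hg1

/-- Telescoped sum. -/
lemma aux_tele (ν : ℝ) (hν : 0 < ν) (hν1 : ν < 1) (m : ℕ) :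
    ∑ k ∈ Finset.range (m + 1),
        ν * ((m : ℝ) + 1) *
          (Gamma ((k : ℝ) + ν) * Gamma ((m : ℝ) + 1 - (k : ℝ) - ν) /
            (Gamma ((k : ℝ) + 1) * Gamma ((m : ℝ) + 2 - (k : ℝ))))
      = Gamma ((m : ℝ) + 1 + ν) * Gamma (1 - ν) / Gamma ((m : ℝ) + 1) := by
  set f : ℕ → ℝ := fun k =>
    Gamma ((k : ℝ) + ν) * Gamma ((m : ℝ) + 2 - (k : ℝ) - ν) /
      (Gamma ((k : ℝ)) * Gamma ((m : ℝ) + 2 - (k : ℝ))) with hf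
  have key : ∑ k ∈ Finset.range (m + 1),
      (f (k + 1) - f k)
      = f (m + 1) - f 0 := Finset.sum_range_sub f (m + 1)
  have congr1 : ∑ k ∈ Finset.range (m + 1),
        ν * ((m : ℝ) + 1) *
          (Gamma ((k : ℝ) + ν) * Gamma ((m : ℝ) + 1 - (k : ℝ) - ν) /
            (Gamma ((k : ℝ) + 1) * Gamma ((m : ℝ) + 2 - (k : ℝ))))
      = ∑ k ∈ Finset.range (m + 1), (f (k + 1) - f k) := by
    apply Finset.sum_congr rfl
    intro k hkmem
    have hk : k ≤ m := by
      have := Finset.mem_range.mp hkmem; omega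
    rw [hf]
    exact (aux_Hstep ν hν hν1 m k hk).symm
  rw [congr1, key, hf]
  simp only []
  have hf0 : Gamma ((0 : ℕ) : ℝ) = 0 := by norm_num [Real.Gamma_zero]
  have e0 : Gamma (((0 : ℕ) : ℝ) + ν) * Gamma ((m : ℝ) + 2 - ((0 : ℕ) : ℝ) - ν) /
      (Gamma (((0 : ℕ) : ℝ)) * Gamma ((m : ℝ) + 2 - ((0 : ℕ) : ℝ))) = 0 := by
    rw [hf0, zero_mul, div_zero]
  rw [e0, sub_zero]
  rw [show (((m + 1 : ℕ)) : ℝ) = (m : ℝ) + 1 by push_cast; ring]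
  rw [show (m : ℝ) + 2 - ((m : ℝ) + 1) - ν = 1 - ν by ring,
    show (m : ℝ) + 2 - ((m : ℝ) + 1) = 1 by ring, Real.Gamma_one, mul_one]

/-- value of the nabla of the Cauchy function. -/
lemma aux_nabla_x (ν : ℝ) (hν : 0 < ν) (hν1 : ν < 1) (s : ℤ) (k : ℕ) :
    nabla (fun τ => rise ((τ - s : ℤ) : ℝ) ν / Real.Gamma (ν + 1)) (s + 1 + (k : ℤ))
      = Gamma ((k : ℝ) + ν) / (Gamma ((k : ℝ) + 1) * Gamma ν) := by
  have e1 : ((s + 1 + (k : ℤ) - s : ℤ) : ℝ) = (k : ℝ) + 1 := by push_cast; ring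
  have e2 : ((s + 1 + (k : ℤ) - 1 - s : ℤ) : ℝ) = (k : ℝ) := by push_cast; ring
  simp only [nabla, e1, e2]
  rcases Nat.eq_zero_or_pos k with rfl | hkpos
  · simp only [Nat.cast_zero, zero_add]
    rw [rise, rise, Real.Gamma_zero, div_zero, zero_div, sub_zero, Real.Gamma_one,
      show (1 : ℝ) + ν = ν + 1 by ring]
    rw [div_one, div_self (Real.Gamma_pos_of_pos (by linarith)).ne']
    have hgν : Gamma ν ≠ 0 := (Real.Gamma_pos_of_pos hν).ne'
    rw [one_mul, div_self hgν]
  · have hkR : (0 : ℝ) < k := by exact_mod_cast hkpos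
    rw [rise, rise]
    rw [show (k : ℝ) + 1 + ν = ((k : ℝ) + ν) + 1 by ring,
      Real.Gamma_add_one (show ((k : ℝ) + ν) ≠ 0 by positivity),
      Real.Gamma_add_one hkR.ne',
      Real.Gamma_add_one hν.ne']
    have hgk : Gamma (k : ℝ) ≠ 0 := (Real.Gamma_pos_of_pos hkR).ne'
    have hgν : Gamma ν ≠ 0 := (Real.Gamma_pos_of_pos hν).ne'
    have hgkν : Gamma ((k : ℝ) + ν) ≠ 0 := (Real.Gamma_pos_of_pos (by positivity)).ne'
    set A := Gamma ((k : ℝ) + ν)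
    set C := Gamma ((k : ℝ))
    set N := Gamma ν
    field_simp
    ring

/-- kernel difference. -/
lemma aux_Kdiff (ν : ℝ) (hν : 0 < ν) (hν1 : ν < 1) (m k : ℕ) (hk : k ≤ m) :
    rise ((m : ℝ) - (k : ℝ) + 2) (-ν) / Real.Gamma (1 - ν)
      - rise ((m : ℝ) - (k : ℝ) + 1) (-ν) / Real.Gamma (1 - ν)
    = -(ν * (Gamma ((m : ℝ) + 1 - k - ν) /
        (Gamma ((m : ℝ) + 2 - k) * Gamma (1 - ν)))) := by
  have hmk : (k : ℝ) ≤ m := by exact_mod_cast hk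
  rw [rise, rise]
  rw [show (m : ℝ) - k + 2 + -ν = ((m : ℝ) + 1 - k - ν) + 1 by ring,
    Real.Gamma_add_one (show ((m : ℝ) + 1 - k - ν) ≠ 0 by nlinarith),
    show (m : ℝ) - k + 2 = ((m : ℝ) + 1 - k) + 1 by ring,
    Real.Gamma_add_one (show ((m : ℝ) + 1 - k) ≠ 0 by nlinarith),
    show (m : ℝ) - k + 1 + -ν = ((m : ℝ) + 1 - k - ν) by ring,
    show (m : ℝ) - k + 1 = ((m : ℝ) + 1 - k) by ring,
    show (m : ℝ) + 2 - k = ((m : ℝ) + 1 - k) + 1 by ring,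
    Real.Gamma_add_one (show ((m : ℝ) + 1 - k) ≠ 0 by nlinarith)]
  have hg1 : Gamma ((m : ℝ) + 1 - k) ≠ 0 := (Real.Gamma_pos_of_pos (by nlinarith)).ne'
  have hg2 : Gamma ((m : ℝ) + 1 - k - ν) ≠ 0 := (Real.Gamma_pos_of_pos (by nlinarith)).ne'
  have hg3 : Gamma (1 - ν) ≠ 0 := (Real.Gamma_pos_of_pos (by linarith)).ne'
  have hmk0 : (m : ℝ) + 1 - k ≠ 0 := by nlinarith
  set B := Gamma ((m : ℝ) + 1 - k - ν)
  set D := Gamma ((m : ℝ) + 1 - k)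
  set E := Gamma (1 - ν)
  field_simp
  ring

end Aux

theorem cauchy_function_simple (ν : ℝ) (hν : 0 < ν) (hν1 : ν < 1) (s : ℤ) :
    (∀ t, s + 1 ≤ t →
      caputo ν s (fun τ => rise ((τ - s : ℤ) : ℝ) ν / Real.Gamma (ν + 1)) (t + 1)
        - caputo ν s (fun τ => rise ((τ - s : ℤ) : ℝ) ν / Real.Gamma (ν + 1)) t = 0) ∧
    rise ((s - s : ℤ) : ℝ) ν / Real.Gamma (ν + 1) = 0 ∧
    nabla (fun τ => rise ((τ - s : ℤ) : ℝ) ν / Real.Gamma (ν + 1)) (s + 1) = 1 := by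
  have hgν : Real.Gamma ν ≠ 0 := (Real.Gamma_pos_of_pos hν).ne'
  have hg1ν : Real.Gamma (1 - ν) ≠ 0 := (Real.Gamma_pos_of_pos (by linarith)).ne'
  refine ⟨?_, ?_, ?_⟩
  · intro t ht
    obtain ⟨m, rfl⟩ : ∃ m : ℕ, t = s + 1 + (m : ℤ) :=
      ⟨(t - (s + 1)).toNat, by omega⟩
    set x : ℤ → ℝ := fun τ => rise ((τ - s : ℤ) : ℝ) ν / Real.Gamma (ν + 1) with hx
    rw [caputo, caputo]
    rw [show s + 1 + (m : ℤ) + 1 = (s + 1 + (m : ℤ)) + 1 by ring]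
    rw [aux_Icc_insert_top (s + 1) (s + 1 + (m : ℤ)) (by omega),
      Finset.sum_insert (by simp)]
    rw [aux_sum_Icc_shift, aux_sum_Icc_shift]
    rw [add_sub_assoc, ← Finset.sum_sub_distrib]
    -- the boundary term
    have hbd : rise (((s + 1 + (m : ℤ) + 1 - (s + 1 + (m : ℤ) + 1) + 1 : ℤ)) : ℝ) (-ν) /
          Real.Gamma (1 - ν) * nabla x (s + 1 + (m : ℤ) + 1)
        = Real.Gamma ((m : ℝ) + 1 + ν) / (Real.Gamma ((m : ℝ) + 2) * Real.Gamma ν) := by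
      have e : ((s + 1 + (m : ℤ) + 1 - (s + 1 + (m : ℤ) + 1) + 1 : ℤ) : ℝ) = 1 := by
        push_cast; ring
      rw [e, rise, show (1 : ℝ) + -ν = 1 - ν by ring, Real.Gamma_one, div_one,
        div_self hg1ν, one_mul]
      have e2 : s + 1 + (m : ℤ) + 1 = s + 1 + ((m + 1 : ℕ) : ℤ) := by push_cast; ring
      rw [e2, hx, aux_nabla_x ν hν hν1 s (m + 1)]
      rw [show (((m + 1 : ℕ)) : ℝ) = (m : ℝ) + 1 by push_cast; ring]
      rw [show (m : ℝ) + 1 + 1 = (m : ℝ) + 2 by ring]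
    rw [hbd]
    -- the sum
    have hsum : ∑ k ∈ Finset.range (m + 1),
        (rise (((s + 1 + (m : ℤ) + 1 - (s + 1 + (k : ℤ)) + 1 : ℤ)) : ℝ) (-ν) /
              Real.Gamma (1 - ν) * nabla x (s + 1 + (k : ℤ))
          - rise (((s + 1 + (m : ℤ) - (s + 1 + (k : ℤ)) + 1 : ℤ)) : ℝ) (-ν) /
              Real.Gamma (1 - ν) * nabla x (s + 1 + (k : ℤ)))
        = -(1 / (((m : ℝ) + 1) * Real.Gamma ν * Real.Gamma (1 - ν))) *
            ∑ k ∈ Finset.range (m + 1),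
              ν * ((m : ℝ) + 1) *
                (Real.Gamma ((k : ℝ) + ν) * Real.Gamma ((m : ℝ) + 1 - (k : ℝ) - ν) /
                  (Real.Gamma ((k : ℝ) + 1) * Real.Gamma ((m : ℝ) + 2 - (k : ℝ)))) := by
      rw [Finset.mul_sum]
      apply Finset.sum_congr rfl
      intro k hkmem
      have hk : k ≤ m := by have := Finset.mem_range.mp hkmem; omega
      have e1 : ((s + 1 + (m : ℤ) + 1 - (s + 1 + (k : ℤ)) + 1 : ℤ) : ℝ)
          = (m : ℝ) - (k : ℝ) + 2 := by push_cast; ring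
      have e2 : ((s + 1 + (m : ℤ) - (s + 1 + (k : ℤ)) + 1 : ℤ) : ℝ)
          = (m : ℝ) - (k : ℝ) + 1 := by push_cast; ring
      rw [e1, e2, ← sub_mul, aux_Kdiff ν hν hν1 m k hk, hx, aux_nabla_x ν hν hν1 s k]
      have hmk : (k : ℝ) ≤ m := by exact_mod_cast hk
      have hg1 : Real.Gamma ((m : ℝ) + 2 - k) ≠ 0 :=
        (Real.Gamma_pos_of_pos (by nlinarith)).ne'
      have hg2 : Real.Gamma ((k : ℝ) + 1) ≠ 0 :=
        (Real.Gamma_pos_of_pos (by positivity)).ne'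
      have hm1 : (m : ℝ) + 1 ≠ 0 := by positivity
      field_simp
    rw [hsum, aux_tele ν hν hν1 m]
    have hgm1 : Real.Gamma ((m : ℝ) + 1) ≠ 0 :=
      (Real.Gamma_pos_of_pos (by positivity)).ne'
    have hgm2 : Real.Gamma ((m : ℝ) + 2) = ((m : ℝ) + 1) * Real.Gamma ((m : ℝ) + 1) := by
      rw [show (m : ℝ) + 2 = ((m : ℝ) + 1) + 1 by ring,
        Real.Gamma_add_one (by positivity)]
    rw [hgm2]
    have hm1 : (m : ℝ) + 1 ≠ 0 := by positivity
    field_simp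
    ring
  · rw [show (s - s : ℤ) = 0 by ring]
    norm_num [rise, Real.Gamma_zero]
  · have e : s + 1 = s + 1 + ((0 : ℕ) : ℤ) := by norm_num
    rw [e, aux_nabla_x ν hν hν1 s 0]
    norm_num [div_self hgν]
end

section
/- The function x₂(t) := ∇_a^{-ν}(1/p)(t) satisfies ∇[p(t+1)∇_{a*}^ν x₂(t+1)] = 0 for all t ∈ ℕ_{a+1}, and together with the constant function x₁(t) = 1 gives two linearly independent solutions of this homogeneous equation. -/
open Finset

noncomputable def Tk (ν : ℝ) (j m : ℕ) : ℝ :=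
  Real.Gamma (j + ν - 1) * Real.Gamma (m + 1 - j - ν) /
    (Real.Gamma j * Real.Gamma (m + 1 - j))

noncomputable def Uk (ν : ℝ) (m k : ℕ) : ℝ :=
  Real.Gamma (k + ν) * Real.Gamma (m + 1 - k - ν) /
    (Real.Gamma k * Real.Gamma (m + 1 - k))

lemma Tk_step {ν : ℝ} (hν : 0 < ν) (hν1 : ν < 1) {m j : ℕ} (h1 : 1 ≤ j) (hj : j ≤ m) :
    Tk ν j (m + 1) = Tk ν j m - (Uk ν m j - Uk ν m (j - 1)) / m := by
  have hm : 1 ≤ m := le_trans h1 hj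
  have hm0 : (0:ℝ) < m := by exact_mod_cast hm
  have hm1 : (1:ℝ) ≤ m := by exact_mod_cast hm
  rcases eq_or_lt_of_le h1 with rfl | h2
  · -- j = 1
    have hU0 : Uk ν m (1 - 1) = 0 := by
      simp [Uk, Real.Gamma_zero]
    rw [hU0, sub_zero]
    unfold Tk Uk
    push_cast
    rw [show (m:ℝ) + 1 + 1 - 1 - ν = (m - ν) + 1 by ring,
        show (m:ℝ) + 1 + 1 - 1 = m + 1 by ring,
        show (m:ℝ) + 1 - 1 - ν = m - ν by ring,
        show (m:ℝ) + 1 - 1 = (m:ℝ) by ring,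
        show (1:ℝ) + ν - 1 = ν by ring,
        show (1:ℝ) + ν = ν + 1 by ring]
    rw [Real.Gamma_add_one (by intro h; nlinarith : (m:ℝ) - ν ≠ 0),
        Real.Gamma_add_one (by positivity : (m:ℝ) ≠ 0),
        Real.Gamma_add_one hν.ne', Real.Gamma_one]
    have g1 : Real.Gamma (m:ℝ) ≠ 0 := (Real.Gamma_pos_of_pos hm0).ne'
    field_simp
  · -- 2 ≤ j
    obtain ⟨i, rfl⟩ : ∃ i : ℕ, j = i + 2 := ⟨j - 2, by omega⟩
    have him : (i:ℝ) + 2 ≤ m := by exact_mod_cast hj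
    unfold Tk Uk
    push_cast
    rw [show (i:ℝ) + 2 + ν - 1 = (i + 1 + ν) by ring,
        show (m:ℝ) + 1 + 1 - ((i:ℝ) + 2) - ν = (m - i - 1 - ν) + 1 by ring,
        show (m:ℝ) + 1 + 1 - ((i:ℝ) + 2) = (m - i - 1) + 1 by ring,
        show (m:ℝ) + 1 - ((i:ℝ) + 2) - ν = m - i - 1 - ν by ring,
        show (m:ℝ) + 1 - ((i:ℝ) + 2) = m - i - 1 by ring,
        show (i:ℝ) + 2 + ν = (i + 1 + ν) + 1 by ring,
        show (m:ℝ) + 1 - ((i:ℝ) + 1) - ν = (m - i - 1 - ν) + 1 by ring,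
        show (m:ℝ) + 1 - ((i:ℝ) + 1) = (m - i - 1) + 1 by ring,
        show (i:ℝ) + 2 = (i + 1) + 1 by ring]
    rw [Real.Gamma_add_one (ne_of_gt (by linarith) : (m:ℝ) - i - 1 - ν ≠ 0),
        Real.Gamma_add_one (by positivity : (i:ℝ) + 1 ≠ 0),
        Real.Gamma_add_one (by linarith : (m:ℝ) - i - 1 ≠ 0),
        Real.Gamma_add_one (by positivity : (i:ℝ) + 1 + ν ≠ 0)]
    have g3 : Real.Gamma ((i:ℝ) + 1) ≠ 0 := (Real.Gamma_pos_of_pos (by positivity)).ne'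
    have g4 : Real.Gamma ((m:ℝ) - i - 1) ≠ 0 :=
      (Real.Gamma_pos_of_pos (by linarith)).ne'
    have h5 : (m:ℝ) - i - 1 ≠ 0 := by linarith
    field_simp
    ring

lemma conv_T {ν : ℝ} (hν : 0 < ν) (hν1 : ν < 1) : ∀ n : ℕ,
    ∑ i ∈ range (n + 1), Tk ν (i + 1) (n + 1) = Real.Gamma ν * Real.Gamma (1 - ν) := by
  intro n
  induction n with
  | zero =>
      rw [Finset.sum_range_one]
      unfold Tk
      push_cast
      rw [show (1:ℝ) + ν - 1 = ν by ring, show (1:ℝ) + 1 - 1 - ν = 1 - ν by ring,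
          show (1:ℝ) + 1 - 1 = 1 by norm_num, Real.Gamma_one]
      ring
  | succ n ih =>
      rw [Finset.sum_range_succ]
      have h1 : ∀ i ∈ range (n + 1),
          Tk ν (i + 1) (n + 1 + 1)
            = Tk ν (i + 1) (n + 1) - (Uk ν (n + 1) (i + 1) - Uk ν (n + 1) i) / (n + 1) := by
        intro i hi
        have hi' : i + 1 ≤ n + 1 := by
          simp only [mem_range] at hi; omega
        have := Tk_step hν hν1 (m := n + 1) (j := i + 1) (by omega) hi'
        simpa using this
      rw [Finset.sum_congr rfl h1, Finset.sum_sub_distrib, ih, ← Finset.sum_div,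
          Finset.sum_range_sub (Uk ν (n + 1))]
      have hU0 : Uk ν (n + 1) 0 = 0 := by simp [Uk, Real.Gamma_zero]
      have hlast : Uk ν (n + 1) (n + 1) / ((n:ℝ) + 1) = Tk ν (n + 1 + 1) (n + 1 + 1) := by
        unfold Tk Uk
        push_cast
        rw [show (n:ℝ) + 1 + 1 - (n + 1) - ν = 1 - ν by ring,
            show (n:ℝ) + 1 + 1 - (n + 1) = 1 by ring,
            show (n:ℝ) + 1 + 1 + ν - 1 = (n + 1) + ν by ring,
            show (n:ℝ) + 1 + 1 + 1 - (n + 1 + 1) - ν = 1 - ν by ring,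
            show (n:ℝ) + 1 + 1 + 1 - (n + 1 + 1) = 1 by ring,
            show (n:ℝ) + 1 + 1 = ((n:ℝ) + 1) + 1 by ring,
            Real.Gamma_add_one (by positivity : (n:ℝ) + 1 ≠ 0), Real.Gamma_one]
        rw [mul_one, mul_one, div_div, mul_comm (Real.Gamma ((n:ℝ) + 1)) ((n:ℝ) + 1)]
      rw [hU0, sub_zero]
      push_cast at hlast ⊢
      rw [hlast]
      ring

lemma gamma_int_nonpos {k : ℤ} (hk : k ≤ 0) : Real.Gamma (k:ℝ) = 0 := by
  have h1 : k = -(((-k).toNat : ℕ) : ℤ) := by omega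
  have h2 : (k:ℝ) = -(((-k).toNat : ℕ) : ℝ) := by exact_mod_cast congrArg (fun z : ℤ => (z:ℝ)) h1
  rw [h2, Real.Gamma_neg_nat_eq_zero]

lemma rise_int_nonpos {k : ℤ} (hk : k ≤ 0) (μ : ℝ) : rise (k:ℝ) μ = 0 := by
  rw [rise, gamma_int_nonpos hk, div_zero]

lemma conv_int {ν : ℝ} (hν : 0 < ν) (hν1 : ν < 1) (c t : ℤ) (h : c ≤ t) :
    ∑ σ ∈ Icc c t, rise ((t - σ + 1 : ℤ) : ℝ) (-ν) / Real.Gamma (1 - ν)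
      * (rise ((σ - c + 1 : ℤ) : ℝ) (ν - 1) / Real.Gamma ν) = 1 := by
  obtain ⟨n, rfl⟩ : ∃ n : ℕ, t = c + n := ⟨(t - c).toNat, by omega⟩
  have key : (∑ σ ∈ Icc c (c + (n:ℤ)), rise ((c + (n:ℤ) - σ + 1 : ℤ) : ℝ) (-ν) / Real.Gamma (1 - ν)
      * (rise ((σ - c + 1 : ℤ) : ℝ) (ν - 1) / Real.Gamma ν))
      = ∑ k ∈ range (n + 1), Tk ν (k + 1) (n + 1) / (Real.Gamma ν * Real.Gamma (1 - ν)) := by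
    refine Finset.sum_nbij' (fun σ => (σ - c).toNat) (fun k => c + (k:ℤ)) ?_ ?_ ?_ ?_ ?_
    · intro σ hσ; simp only [mem_Icc] at hσ; simp only [mem_range]; omega
    · intro k hk; simp only [mem_range] at hk; simp only [mem_Icc]; omega
    · intro σ hσ; simp only [mem_Icc] at hσ; beta_reduce; omega
    · intro k hk; simp only [mem_range] at hk; beta_reduce; omega
    · intro σ hσ
      simp only [mem_Icc] at hσ
      beta_reduce
      obtain ⟨i, rfl⟩ : ∃ i : ℕ, σ = c + i := ⟨(σ - c).toNat, by omega⟩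
      have hin : i ≤ n := by omega
      have e1 : (c + (i:ℤ) - c).toNat = i := by omega
      rw [e1]
      have e2 : ((c + (n:ℤ) - (c + (i:ℤ)) + 1 : ℤ) : ℝ) = (n:ℝ) - i + 1 := by push_cast; ring
      have e3 : ((c + (i:ℤ) - c + 1 : ℤ) : ℝ) = (i:ℝ) + 1 := by push_cast; ring
      rw [e2, e3]
      unfold rise Tk
      push_cast
      rw [show (i:ℝ) + 1 + (ν - 1) = (i:ℝ) + 1 + ν - 1 by ring,
          show (n:ℝ) - i + 1 + -ν = (n:ℝ) + 1 + 1 - ((i:ℝ) + 1) - ν by ring,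
          show (n:ℝ) - i + 1 = (n:ℝ) + 1 + 1 - ((i:ℝ) + 1) by ring]
      ring
  rw [key, ← Finset.sum_div, conv_T hν hν1 n, div_self]
  exact (mul_pos (Real.Gamma_pos_of_pos hν) (Real.Gamma_pos_of_pos (by linarith))).ne'

lemma caputo_fsum {ν : ℝ} (hν : 0 < ν) (hν1 : ν < 1) (a : ℤ) (f : ℤ → ℝ) (t : ℤ)
    (ht : a + 1 ≤ t) :
    caputo ν a (fsum ν a f) t = f t := by
  have hsplit : Icc (a+1) t = insert t (Icc (a+1) (t-1)) := by
    ext x; simp only [mem_Icc, mem_insert]; omega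
  have htmem : t ∉ Icc (a+1) (t-1) := by
    simp only [mem_Icc]; omega
  have S1 : ∑ σ ∈ Icc (a+1) t,
      rise ((t - σ + 1 : ℤ):ℝ) (-ν) / Real.Gamma (1-ν) * fsum ν a f σ
      = ∑ τ ∈ Icc (a+1) t, f τ := by
    have e1 : ∀ σ ∈ Icc (a+1) t,
        rise ((t - σ + 1 : ℤ):ℝ) (-ν) / Real.Gamma (1-ν) * fsum ν a f σ
          = ∑ τ ∈ Icc (a+1) t, rise ((t - σ + 1 : ℤ):ℝ) (-ν) / Real.Gamma (1-ν)
              * (rise ((σ - τ + 1 : ℤ):ℝ) (ν - 1) / Real.Gamma ν * f τ) := by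
      intro σ hσ
      simp only [mem_Icc] at hσ
      rw [fsum, Finset.sum_subset (Finset.Icc_subset_Icc_right hσ.2)
        (fun x hx hx' => by
          simp only [mem_Icc] at hx hx'
          rw [rise_int_nonpos (by omega : (σ - x + 1 : ℤ) ≤ 0)]
          simp), Finset.mul_sum]
    rw [Finset.sum_congr rfl e1, Finset.sum_comm]
    refine Finset.sum_congr rfl fun τ hτ => ?_
    simp only [mem_Icc] at hτ
    have hsub : Icc τ t ⊆ Icc (a+1) t := Finset.Icc_subset_Icc hτ.1 (le_refl t)
    rw [← Finset.sum_subset hsub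
      (fun x hx hx' => by
        simp only [mem_Icc] at hx hx'
        rw [rise_int_nonpos (by omega : (x - τ + 1 : ℤ) ≤ 0)]
        simp)]
    simp only [← mul_assoc]
    rw [← Finset.sum_mul, conv_int hν hν1 τ t hτ.2, one_mul]
  have S2 : ∑ σ ∈ Icc (a+1) t,
      rise ((t - σ + 1 : ℤ):ℝ) (-ν) / Real.Gamma (1-ν) * fsum ν a f (σ-1)
      = ∑ τ ∈ Icc (a+1) (t-1), f τ := by
    have e1 : ∀ σ ∈ Icc (a+1) t,
        rise ((t - σ + 1 : ℤ):ℝ) (-ν) / Real.Gamma (1-ν) * fsum ν a f (σ-1)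
          = ∑ τ ∈ Icc (a+1) t, rise ((t - σ + 1 : ℤ):ℝ) (-ν) / Real.Gamma (1-ν)
              * (rise ((σ - 1 - τ + 1 : ℤ):ℝ) (ν - 1) / Real.Gamma ν * f τ) := by
      intro σ hσ
      simp only [mem_Icc] at hσ
      rw [fsum, Finset.sum_subset (Finset.Icc_subset_Icc (le_refl (a+1)) (by omega : σ - 1 ≤ t))
        (fun x hx hx' => by
          simp only [mem_Icc] at hx hx'
          rw [rise_int_nonpos (by omega : (σ - 1 - x + 1 : ℤ) ≤ 0)]
          simp), Finset.mul_sum]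
    rw [Finset.sum_congr rfl e1, Finset.sum_comm]
    nth_rewrite 1 [hsplit]
    rw [Finset.sum_insert htmem]
    have hz : ∑ σ ∈ Icc (a+1) t, rise ((t - σ + 1 : ℤ):ℝ) (-ν) / Real.Gamma (1-ν)
        * (rise ((σ - 1 - t + 1 : ℤ):ℝ) (ν - 1) / Real.Gamma ν * f t) = 0 := by
      refine Finset.sum_eq_zero fun σ hσ => ?_
      simp only [mem_Icc] at hσ
      rw [rise_int_nonpos (by omega : (σ - 1 - t + 1 : ℤ) ≤ 0)]
      simp
    rw [hz, zero_add]
    refine Finset.sum_congr rfl fun τ hτ => ?_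
    simp only [mem_Icc] at hτ
    have hsub : Icc (τ+1) t ⊆ Icc (a+1) t := Finset.Icc_subset_Icc (by omega) (le_refl t)
    rw [← Finset.sum_subset hsub
      (fun x hx hx' => by
        simp only [mem_Icc] at hx hx'
        rw [rise_int_nonpos (by omega : (x - 1 - τ + 1 : ℤ) ≤ 0)]
        simp)]
    have earg : ∀ σ : ℤ, ((σ - 1 - τ + 1 : ℤ):ℝ) = ((σ - (τ+1) + 1 : ℤ):ℝ) := by
      intro σ; push_cast; ring
    simp only [earg, ← mul_assoc]
    rw [← Finset.sum_mul, conv_int hν hν1 (τ+1) t (by omega), one_mul]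
  simp only [caputo, nabla, mul_sub]
  rw [Finset.sum_sub_distrib]
  have S1' := S1
  have S2' := S2
  rw [S1', S2', hsplit, Finset.sum_insert htmem]
  ring

theorem two_independent_solutions (ν : ℝ) (hν : 0 < ν) (hν1 : ν < 1) (a : ℤ)
    (p : ℤ → ℝ) (hp : ∀ t, a + 1 ≤ t → 0 < p t) :
    (∀ t, a + 1 ≤ t →
      p (t + 1) * caputo ν a (fsum ν a (fun τ => 1 / p τ)) (t + 1)
        - p t * caputo ν a (fsum ν a (fun τ => 1 / p τ)) t = 0) ∧
    (∀ t, a + 1 ≤ t →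
      p (t + 1) * caputo ν a (fun _ => 1) (t + 1)
        - p t * caputo ν a (fun _ => 1) t = 0) ∧
    (∀ c₁ c₂ : ℝ,
      (∀ t, a ≤ t → c₁ * 1 + c₂ * fsum ν a (fun τ => 1 / p τ) t = 0) →
      c₁ = 0 ∧ c₂ = 0) := by
  refine ⟨?_, ?_, ?_⟩
  · intro t ht
    rw [caputo_fsum hν hν1 a _ (t+1) (by omega), caputo_fsum hν hν1 a _ t ht]
    have hp1 : p (t+1) ≠ 0 := (hp (t+1) (by omega)).ne'
    have hp2 : p t ≠ 0 := (hp t ht).ne'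
    field_simp
    norm_num
  · intro t ht
    have hz : ∀ s : ℤ, caputo ν a (fun _ => 1) s = 0 := by
      intro s; simp [caputo, nabla]
    rw [hz, hz]; ring
  · intro c₁ c₂ hc
    have h0 := hc a le_rfl
    have hfa : fsum ν a (fun τ => 1 / p τ) a = 0 := by
      rw [fsum, Finset.Icc_eq_empty (by omega), Finset.sum_empty]
    rw [hfa, mul_zero, mul_one, add_zero] at h0
    have h1 := hc (a+1) (by omega)
    have hfa1 : fsum ν a (fun τ => 1 / p τ) (a+1) = 1 / p (a+1) := by
      rw [fsum, Finset.Icc_self, Finset.sum_singleton,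
          show ((a+1-(a+1)+1 : ℤ):ℝ) = 1 by push_cast; ring,
          rise, show (1:ℝ) + (ν-1) = ν by ring, Real.Gamma_one, div_one,
          div_self (Real.Gamma_pos_of_pos hν).ne', one_mul]
    rw [h0, zero_mul, zero_add, hfa1] at h1
    have hpa : p (a+1) ≠ 0 := (hp (a+1) le_rfl).ne'
    refine ⟨h0, ?_⟩
    rcases mul_eq_zero.mp h1 with h | h
    · exact h
    · exact absurd h (by simp [hpa])
end

section
/- The Green's function for the conjugate BVP ∇∇_{a*}^ν x(t+1) = 0, x(a)=x(b)=0 is G(t,s) = −(b−s)^{↑ν}(t−a)^{↑ν}/(Γ(1+ν)(b−a)^{↑ν}) for a ≤ t ≤ s ≤ b, and G(t,s) = −(b−s)^{↑ν}(t−a)^{↑ν}/(Γ(1+ν)(b−a)^{↑ν}) + (t−s)^{↑ν}/Γ(1+ν) for a ≤ s ≤ t ≤ b; that is, for each fixed s ∈ ℕ_a^b, u(t,s) := −(b−s)^{↑ν}(t−a)^{↑ν}/(Γ(1+ν)(b−a)^{↑ν}) satisfies ∇∇_{a*}^ν u(t+1,s) = 0 on ℕ_{a+1}^{b-1}, u(a,s)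 = 0, and u(b,s) = −(b−s)^{↑ν}/Γ(1+ν). -/
open Finset

/-- The function  in the Green's function for the conjugate BVP. -/
noncomputable def uFun (ν : ℝ) (a b s : ℤ) (t : ℤ) : ℝ :=
  -(rise ((b - s : ℤ) : ℝ) ν * rise ((t - a : ℤ) : ℝ) ν) /
    (Real.Gamma (1 + ν) * rise ((b - a : ℤ) : ℝ) ν)

/-- Summand of the Caputo difference of the rising function, reindexed. -/
noncomputable def Sterm (ν : ℝ) (n i : ℕ) : ℝ :=
  Real.Gamma ((n:ℝ) - i - ν) * Real.Gamma ((i:ℝ) + ν) /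
    (Real.Gamma ((n:ℝ) - i) * Real.Gamma ((i:ℝ) + 1))

/-- Telescoping certificate. -/
noncomputable def Bfun (ν : ℝ) (n j : ℕ) : ℝ :=
  -(j:ℝ) * Real.Gamma ((n:ℝ) - j + 1 - ν) * Real.Gamma ((j:ℝ) + ν) /
    ((n:ℝ) * Real.Gamma ((n:ℝ) - j + 1) * Real.Gamma ((j:ℝ) + 1))

lemma tele {ν : ℝ} (hν : 0 < ν) (hν1 : ν < 1) (n j : ℝ) (hj : 0 ≤ j) (hjn : j + 1 ≤ n) :
    Real.Gamma (n + 1 - j - ν) * Real.Gamma (j + ν) /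
      (Real.Gamma (n + 1 - j) * Real.Gamma (j + 1)) =
    Real.Gamma (n - j - ν) * Real.Gamma (j + ν) /
      (Real.Gamma (n - j) * Real.Gamma (j + 1)) +
    (-(j + 1) * Real.Gamma (n - (j + 1) + 1 - ν) * Real.Gamma ((j:ℝ) + 1 + ν) /
        (n * Real.Gamma (n - (j + 1) + 1) * Real.Gamma ((j:ℝ) + 1 + 1)) -
      -j * Real.Gamma (n - j + 1 - ν) * Real.Gamma (j + ν) /
        (n * Real.Gamma (n - j + 1) * Real.Gamma (j + 1))) := by
  have hnj : (0:ℝ) < n - j := by linarith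
  have hnjν : (0:ℝ) < n - j - ν := by linarith
  have hjν : (0:ℝ) < j + ν := by linarith
  have hj1 : (0:ℝ) < j + 1 := by linarith
  have hn : (0:ℝ) < n := by linarith
  have e1 : Real.Gamma (n - j + 1 - ν) = (n - j - ν) * Real.Gamma (n - j - ν) := by
    rw [show n - j + 1 - ν = (n - j - ν) + 1 by ring, Real.Gamma_add_one hnjν.ne']
  have e1' : Real.Gamma (n + 1 - j - ν) = (n - j - ν) * Real.Gamma (n - j - ν) := by
    rw [show n + 1 - j - ν = (n - j - ν) + 1 by ring, Real.Gamma_add_one hnjν.ne']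
  have e2 : Real.Gamma (n - j + 1) = (n - j) * Real.Gamma (n - j) := by
    rw [show n - j + 1 = (n - j) + 1 by ring, Real.Gamma_add_one hnj.ne']
  have e2' : Real.Gamma (n + 1 - j) = (n - j) * Real.Gamma (n - j) := by
    rw [show n + 1 - j = (n - j) + 1 by ring, Real.Gamma_add_one hnj.ne']
  have e3 : Real.Gamma ((j:ℝ) + 1 + ν) = (j + ν) * Real.Gamma (j + ν) := by
    rw [show (j:ℝ) + 1 + ν = (j + ν) + 1 by ring, Real.Gamma_add_one hjν.ne']
  have e4 : Real.Gamma ((j:ℝ) + 1 + 1) = (j + 1) * Real.Gamma (j + 1) :=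
    Real.Gamma_add_one hj1.ne'
  rw [show n - (j + 1) + 1 - ν = n - j - ν by ring, show n - (j + 1) + 1 = n - j by ring,
    e1, e1', e2, e2', e3, e4]
  have g1 := (Real.Gamma_pos_of_pos hnj).ne'
  have g2 := (Real.Gamma_pos_of_pos hnjν).ne'
  have g3 := (Real.Gamma_pos_of_pos hjν).ne'
  have g4 := (Real.Gamma_pos_of_pos hj1).ne'
  field_simp
  ring

lemma tele' {ν : ℝ} (hν : 0 < ν) (hν1 : ν < 1) (n i : ℕ) (hi : i < n) :
    Sterm ν (n + 1) i = Sterm ν n i + (Bfun ν n (i + 1) - Bfun ν n i) := by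
  unfold Sterm Bfun
  push_cast
  exact tele hν hν1 (n:ℝ) (i:ℝ) (Nat.cast_nonneg i) (by exact_mod_cast hi)

lemma Bfun_zero (ν : ℝ) (n : ℕ) : Bfun ν n 0 = 0 := by
  simp [Bfun]

lemma Sterm_last {ν : ℝ} (n : ℕ) (hn : 1 ≤ n) : Sterm ν (n + 1) n = -Bfun ν n n := by
  unfold Sterm Bfun
  push_cast
  rw [show (n:ℝ) + 1 - n - ν = 1 - ν by ring, show (n:ℝ) + 1 - n = 1 by ring,
    show (n:ℝ) - n + 1 - ν = 1 - ν by ring, show (n:ℝ) - n + 1 = 1 by ring, Real.Gamma_one]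
  have hn' : (n:ℝ) ≠ 0 := by positivity
  field_simp

lemma S_succ {ν : ℝ} (hν : 0 < ν) (hν1 : ν < 1) (n : ℕ) (hn : 1 ≤ n) :
    ∑ i ∈ range (n + 1), Sterm ν (n + 1) i = ∑ i ∈ range n, Sterm ν n i := by
  rw [Finset.sum_range_succ,
    Finset.sum_congr rfl (fun i hi => tele' hν hν1 n i (Finset.mem_range.mp hi)),
    Finset.sum_add_distrib, Finset.sum_range_sub (Bfun ν n), Bfun_zero, Sterm_last n hn]
  ring

lemma rise_diff {ν : ℝ} (hν : 0 < ν) (i : ℕ) :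
    rise ((i:ℝ) + 1) ν - rise (i:ℝ) ν = ν * Real.Gamma ((i:ℝ) + ν) / Real.Gamma ((i:ℝ) + 1) := by
  rcases Nat.eq_zero_or_pos i with hi | hi
  · subst hi
    simp only [Nat.cast_zero, zero_add, rise, Real.Gamma_zero, div_zero, sub_zero,
      Real.Gamma_one, div_one]
    rw [show (1:ℝ) + ν = ν + 1 by ring, Real.Gamma_add_one hν.ne']
  · have hipos : (0:ℝ) < i := by exact_mod_cast hi
    have hiν : (0:ℝ) < (i:ℝ) + ν := by linarith
    have h1 : Real.Gamma ((i:ℝ) + 1 + ν) = ((i:ℝ) + ν) * Real.Gamma ((i:ℝ) + ν) := by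
      rw [show (i:ℝ) + 1 + ν = ((i:ℝ) + ν) + 1 by ring, Real.Gamma_add_one hiν.ne']
    have h2 : Real.Gamma ((i:ℝ) + 1) = (i:ℝ) * Real.Gamma (i:ℝ) :=
      Real.Gamma_add_one hipos.ne'
    have h3 : Real.Gamma ((i:ℝ)) ≠ 0 := (Real.Gamma_pos_of_pos hipos).ne'
    simp only [rise]
    rw [h1, h2]
    field_simp
    ring

lemma caputo_rise {ν : ℝ} (hν : 0 < ν) (hν1 : ν < 1) (a : ℤ) (n : ℕ) :
    caputo ν a (fun τ => rise ((τ - a : ℤ) : ℝ) ν) (a + n) =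
      ν / Real.Gamma (1 - ν) * ∑ i ∈ range n, Sterm ν n i := by
  unfold caputo
  rw [Finset.mul_sum]
  have hIcc : Finset.Icc (a + 1) (a + (n:ℤ)) =
      Finset.map ⟨fun i : ℕ => a + 1 + i, fun x y h => by simpa using h⟩ (Finset.range n) := by
    ext x
    simp only [Finset.mem_Icc, Finset.mem_map, Finset.mem_range, Function.Embedding.coeFn_mk, DFunLike.coe]
    constructor
    · rintro ⟨h1, h2⟩
      exact ⟨(x - (a + 1)).toNat, by omega, by omega⟩
    · rintro ⟨i, hi, rfl⟩
      omega
  rw [hIcc, Finset.sum_map]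
  apply Finset.sum_congr rfl
  intro i hi
  have hi' : i < n := Finset.mem_range.mp hi
  simp only [Function.Embedding.coeFn_mk, DFunLike.coe, nabla]
  have e1 : ((a + (n:ℤ) - (a + 1 + (i:ℤ)) + 1 : ℤ) : ℝ) = (n:ℝ) - i := by push_cast; ring
  have e2 : ((a + 1 + (i:ℤ) - a : ℤ) : ℝ) = (i:ℝ) + 1 := by push_cast; ring
  have e3 : ((a + 1 + (i:ℤ) - 1 - a : ℤ) : ℝ) = (i:ℝ) := by push_cast; ring
  rw [e1, e2, e3, rise_diff hν i]
  unfold rise Sterm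
  rw [show (n:ℝ) - i + -ν = (n:ℝ) - i - ν by ring]
  ring

theorem greens_function_conjugate (ν : ℝ) (hν : 0 < ν) (hν1 : ν < 1) (a b : ℤ)
    (hab : a < b) (s : ℤ) (hs₁ : a ≤ s) (hs₂ : s ≤ b) :
    (∀ t, a + 1 ≤ t → t ≤ b - 1 →
      caputo ν a (uFun ν a b s) (t + 1) - caputo ν a (uFun ν a b s) t = 0) ∧
    uFun ν a b s a = 0 ∧
    uFun ν a b s b = -(rise ((b - s : ℤ) : ℝ) ν) / Real.Gamma (1 + ν) := by
  set c : ℝ := -(rise ((b - s : ℤ) : ℝ) ν) / (Real.Gamma (1 + ν) * rise ((b - a : ℤ) : ℝ) ν)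
    with hc_def
  have hc : uFun ν a b s = fun t => c * rise ((t - a : ℤ) : ℝ) ν := by
    funext t
    unfold uFun
    rw [hc_def]
    ring
  have key : ∀ (c : ℝ) (t : ℤ), caputo ν a (fun τ => c * rise ((τ - a : ℤ) : ℝ) ν) t =
      c * caputo ν a (fun τ => rise ((τ - a : ℤ) : ℝ) ν) t := by
    intro c t
    unfold caputo nabla
    rw [Finset.mul_sum]
    exact Finset.sum_congr rfl fun τ _ => by ring
  refine ⟨?_, ?_, ?_⟩
  · intro t ht1 ht2
    set n : ℕ := (t - a).toNat with hn_def
    have hn1 : 1 ≤ n := by omega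
    have ht : t = a + (n:ℤ) := by omega
    have ht' : t + 1 = a + ((n + 1 : ℕ) : ℤ) := by push_cast; omega
    rw [hc, key, key]
    have h1 : caputo ν a (fun τ => rise ((τ - a : ℤ) : ℝ) ν) t =
        ν / Real.Gamma (1 - ν) * ∑ i ∈ range n, Sterm ν n i := by
      rw [ht]; exact caputo_rise hν hν1 a n
    have h2 : caputo ν a (fun τ => rise ((τ - a : ℤ) : ℝ) ν) (t + 1) =
        ν / Real.Gamma (1 - ν) * ∑ i ∈ range (n + 1), Sterm ν (n + 1) i := by
      rw [ht']; exact caputo_rise hν hν1 a (n + 1)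
    rw [h1, h2, S_succ hν hν1 n hn1]
    ring
  · simp [uFun, rise, Real.Gamma_zero]
  · have hba : (1:ℝ) ≤ ((b - a : ℤ) : ℝ) := by exact_mod_cast (by omega : (1:ℤ) ≤ b - a)
    have h1 : rise ((b - a : ℤ) : ℝ) ν ≠ 0 := by
      unfold rise
      have p1 : (0:ℝ) < ((b - a : ℤ) : ℝ) + ν := by linarith
      have p2 : (0:ℝ) < ((b - a : ℤ) : ℝ) := by linarith
      exact div_ne_zero (Real.Gamma_pos_of_pos p1).ne' (Real.Gamma_pos_of_pos p2).ne'
    have h2 : Real.Gamma (1 + ν) ≠ 0 := (Real.Gamma_pos_of_pos (by linarith)).ne'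
    unfold uFun
    push_cast at h1 ⊢
    field_simp
end

section
/- The Green's function G(t,s) for the BVP ∇∇_{a*}^ν x(t+1)=0, x(a)=x(b)=0 satisfies G(t,s) ≤ 0 for all t, s ∈ ℕ_a^b. -/
open Finset

/-- Green function for the conjugate BVP `∇∇_{a*}^ν x(t+1) = 0`, `x(a)=x(b)=0`. -/
noncomputable def Grn (ν : ℝ) (a b t s : ℤ) : ℝ :=
  if t ≤ s then
    -(rise ((b - s : ℤ) : ℝ) ν * rise ((t - a : ℤ) : ℝ) ν) /
      (Real.Gamma (1 + ν) * rise ((b - a : ℤ) : ℝ) ν)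
  else
    -(rise ((b - s : ℤ) : ℝ) ν * rise ((t - a : ℤ) : ℝ) ν) /
      (Real.Gamma (1 + ν) * rise ((b - a : ℤ) : ℝ) ν)
      + rise ((t - s : ℤ) : ℝ) ν / Real.Gamma (1 + ν)

lemma rise_pos {ν : ℝ} (hν : 0 < ν) (n : ℕ) : 0 < rise ((n : ℝ) + 1) ν := by
  unfold rise
  apply div_pos
  · exact Real.Gamma_pos_of_pos (by positivity)
  · exact Real.Gamma_pos_of_pos (by positivity)

lemma rise_succ {ν : ℝ} (hν : 0 < ν) (n : ℕ) :
    rise ((n : ℝ) + 2) ν = rise ((n : ℝ) + 1) ν * (((n : ℝ) + 1 + ν) / ((n : ℝ) + 1)) := by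
  unfold rise
  have h1 : ((n : ℝ) + 2 + ν) = ((n : ℝ) + 1 + ν) + 1 := by ring
  have h2 : ((n : ℝ) + 2) = ((n : ℝ) + 1) + 1 := by ring
  rw [h1, h2, Real.Gamma_add_one (by positivity), Real.Gamma_add_one (by positivity)]
  have g1 : Real.Gamma ((n : ℝ) + 1) ≠ 0 := ne_of_gt (Real.Gamma_pos_of_pos (by positivity))
  have g2 : ((n : ℝ) + 1) ≠ 0 := by positivity
  field_simp

lemma ratio_mono {ν : ℝ} (hν : 0 < ν) {m n : ℕ} (h : m ≤ n) :
    ((n : ℝ) + 1 + ν) / ((n : ℝ) + 1) ≤ ((m : ℝ) + 1 + ν) / ((m : ℝ) + 1) := by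
  have hm : (0:ℝ) < (m:ℝ) + 1 := by positivity
  have hn : (0:ℝ) < (n:ℝ) + 1 := by positivity
  rw [div_le_div_iff₀ hn hm]
  have : (m:ℝ) ≤ (n:ℝ) := by exact_mod_cast h
  nlinarith

lemma key {ν : ℝ} (hν : 0 < ν) (m n k : ℕ) (h : m ≤ n) :
    rise ((m : ℝ) + 1) ν * rise ((n + k : ℕ) + 1 : ℝ) ν ≤
      rise ((m + k : ℕ) + 1 : ℝ) ν * rise ((n : ℝ) + 1) ν := by
  induction k with
  | zero => simp
  | succ k ih =>
    have hnk : ((n + (k+1) : ℕ) : ℝ) + 1 = ((n + k : ℕ) : ℝ) + 2 := by push_cast; ring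
    have hmk : ((m + (k+1) : ℕ) : ℝ) + 1 = ((m + k : ℕ) : ℝ) + 2 := by push_cast; ring
    rw [hnk, hmk, rise_succ hν, rise_succ hν]
    have p1 := rise_pos hν m
    have p2 := rise_pos hν n
    have p3 := rise_pos hν (m+k)
    have p4 := rise_pos hν (n+k)
    have hr : ((n+k : ℕ):ℝ) + 1 + ν > 0 := by positivity
    have hr2 : ((n+k : ℕ):ℝ) + 1 > 0 := by positivity
    calc rise ((m : ℝ) + 1) ν * (rise (((n+k:ℕ):ℝ) + 1) ν * ((((n+k:ℕ):ℝ) + 1 + ν) / (((n+k:ℕ):ℝ) + 1)))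
        = (rise ((m : ℝ) + 1) ν * rise (((n+k:ℕ):ℝ) + 1) ν) * ((((n+k:ℕ):ℝ) + 1 + ν) / (((n+k:ℕ):ℝ) + 1)) := by ring
      _ ≤ (rise (((m+k:ℕ):ℝ) + 1) ν * rise ((n : ℝ) + 1) ν) * ((((n+k:ℕ):ℝ) + 1 + ν) / (((n+k:ℕ):ℝ) + 1)) := by
          apply mul_le_mul_of_nonneg_right ih (by positivity)
      _ ≤ (rise (((m+k:ℕ):ℝ) + 1) ν * rise ((n : ℝ) + 1) ν) * ((((m+k:ℕ):ℝ) + 1 + ν) / (((m+k:ℕ):ℝ) + 1)) := by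
          apply mul_le_mul_of_nonneg_left (ratio_mono hν (by omega)) (by positivity)
      _ = rise (((m+k:ℕ):ℝ) + 1) ν * ((((m+k:ℕ):ℝ) + 1 + ν) / (((m+k:ℕ):ℝ) + 1)) * rise ((n : ℝ) + 1) ν := by ring

lemma rise_nonneg {ν : ℝ} (hν : 0 < ν) (m : ℤ) (hm : 0 ≤ m) : 0 ≤ rise ((m : ℤ) : ℝ) ν := by
  rcases eq_or_lt_of_le hm with h | h
  · simp [← h, rise, Real.Gamma_zero]
  · obtain ⟨n, rfl⟩ : ∃ n : ℕ, m = (n : ℤ) + 1 := ⟨(m - 1).toNat, by omega⟩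
    have := rise_pos hν n
    push_cast
    linarith [rise_pos hν n]

lemma rise_pos_int {ν : ℝ} (hν : 0 < ν) (m : ℤ) (hm : 1 ≤ m) : 0 < rise ((m : ℤ) : ℝ) ν := by
  obtain ⟨n, rfl⟩ : ∃ n : ℕ, m = (n : ℤ) + 1 := ⟨(m - 1).toNat, by omega⟩
  have := rise_pos hν n
  push_cast
  linarith


theorem greens_function_nonpositive (ν : ℝ) (hν : 0 < ν) (hν1 : ν < 1) (a b : ℤ)
    (hab : a < b) :
    ∀ t s : ℤ, a ≤ t → t ≤ b → a ≤ s → s ≤ b → Grn ν a b t s ≤ 0 := by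
  intro t s hat htb has hsb
  have hC : 0 < Real.Gamma (1 + ν) := Real.Gamma_pos_of_pos (by linarith)
  have hD : 0 < rise ((b - a : ℤ) : ℝ) ν := rise_pos_int hν _ (by omega)
  have hA : 0 ≤ rise ((b - s : ℤ) : ℝ) ν := rise_nonneg hν _ (by omega)
  have hB : 0 ≤ rise ((t - a : ℤ) : ℝ) ν := rise_nonneg hν _ (by omega)
  unfold Grn
  split_ifs with h
  · apply div_nonpos_of_nonpos_of_nonneg
    · nlinarith
    · positivity
  · -- s < t
    push_neg at h
    set m : ℕ := (t - s - 1).toNat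
    set n : ℕ := (b - s - 1).toNat
    set k : ℕ := (s - a).toNat
    have e1 : ((t - s : ℤ) : ℝ) = (m : ℝ) + 1 := by
      have : (t - s : ℤ) = (m : ℤ) + 1 := by simp [m]; omega
      rw [this]; push_cast; ring
    have e2 : ((b - s : ℤ) : ℝ) = (n : ℝ) + 1 := by
      have : (b - s : ℤ) = (n : ℤ) + 1 := by simp [n]; omega
      rw [this]; push_cast; ring
    have e3 : ((b - a : ℤ) : ℝ) = ((n + k : ℕ) : ℝ) + 1 := by
      have : (b - a : ℤ) = ((n + k : ℕ) : ℤ) + 1 := by simp [n, k]; omega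
      rw [this]; push_cast; ring
    have e4 : ((t - a : ℤ) : ℝ) = ((m + k : ℕ) : ℝ) + 1 := by
      have : (t - a : ℤ) = ((m + k : ℕ) : ℤ) + 1 := by simp [m, k]; omega
      rw [this]; push_cast; ring
    have hmn : m ≤ n := by simp [m, n]; omega
    have hkey := key hν m n k hmn
    rw [e1, e2, e3, e4] at *
    have hE : 0 < rise ((m : ℝ) + 1) ν := rise_pos hν m
    have hD' : 0 < rise ((n + k : ℕ) + 1 : ℝ) ν := rise_pos hν (n + k)
    have hB' : 0 < rise ((m + k : ℕ) + 1 : ℝ) ν := rise_pos hν (m + k)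
    have hA' : 0 < rise ((n : ℝ) + 1) ν := rise_pos hν n
    rw [div_add_div _ _ (mul_ne_zero hC.ne' hD'.ne') hC.ne', div_nonpos_iff]
    right
    refine ⟨?_, ?_⟩
    · nlinarith [mul_le_mul_of_nonneg_left hkey hC.le]
    · positivity
end

section
/- For every t ∈ ℕ_a^b, Σ_{s=a+1}^{b} |G(t,s)| = (t−a)^{↑ν}(b−t)/Γ(ν+2) ≤ (b−a)²/(4Γ(ν+2)), where G is the Green's function for ∇∇_{a*}^ν x(t+1)=0, x(a)=x(b)=0. -/
open Finset

lemma rise_nonpos (μ : ℝ) {k : ℤ} (hk : k ≤ 0) : rise (k:ℝ) μ = 0 := by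
  have h : Real.Gamma (k:ℝ) = 0 := by
    obtain ⟨n, rfl⟩ : ∃ n : ℕ, k = -(n:ℤ) := ⟨(-k).toNat, by omega⟩
    rw [show ((-(n:ℤ):ℤ):ℝ) = -(n:ℝ) by push_cast; ring]
    exact Real.Gamma_neg_nat_eq_zero n
  simp [rise, h]

lemma rise_pos_s16 {x μ : ℝ} (hx : 0 < x) (hxμ : 0 < x + μ) : 0 < rise x μ :=
  div_pos (Real.Gamma_pos_of_pos hxμ) (Real.Gamma_pos_of_pos hx)

lemma rise_int_nonneg (ν : ℝ) (hν : 0 < ν) (k : ℤ) : 0 ≤ rise (k:ℝ) ν := by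
  rcases le_or_gt k 0 with h | h
  · rw [rise_nonpos _ h]
  · have hk : (0:ℝ) < (k:ℝ) := by exact_mod_cast h
    exact (rise_pos_s16 hk (by linarith)).le

lemma rise_succ_s16 {x μ : ℝ} (hx : 0 < x) (hxμ : 0 < x + μ) :
    rise (x+1) μ = rise x μ * ((x+μ)/x) := by
  unfold rise
  rw [show x + 1 + μ = (x+μ) + 1 by ring, Real.Gamma_add_one hxμ.ne',
    Real.Gamma_add_one hx.ne']
  have h1 : Real.Gamma x ≠ 0 := (Real.Gamma_pos_of_pos hx).ne'
  field_simp

lemma rise_shift {x ν : ℝ} (hxν : 0 < x + ν) :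
    rise x (ν+1) = (x+ν) * rise x ν := by
  unfold rise
  rw [show x + (ν+1) = (x+ν) + 1 by ring, Real.Gamma_add_one hxν.ne', mul_div_assoc]

lemma rise_zero (μ : ℝ) : rise 0 μ = 0 := by simp [rise, Real.Gamma_zero]

lemma rise_neg_one (μ : ℝ) : rise (-1) μ = 0 := by
  have h : Real.Gamma (-1) = 0 := by
    rw [show (-1:ℝ) = -((1:ℕ):ℝ) by norm_num]; exact Real.Gamma_neg_nat_eq_zero 1
  simp [rise, h]

lemma rise_step (ν : ℝ) (hν : 0 < ν) (N : ℤ) (hN : -1 ≤ N) :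
    rise ((N+1:ℤ):ℝ) (ν+1) = rise ((N:ℤ):ℝ) (ν+1) + (ν+1) * rise ((N+1:ℤ):ℝ) ν := by
  rcases eq_or_lt_of_le hN with h | h
  · rw [← h]; push_cast
    rw [rise_zero, rise_zero, rise_neg_one]; ring
  · rcases eq_or_lt_of_le (by omega : (0:ℤ) ≤ N) with h0 | h0
    · rw [← h0]; push_cast
      rw [rise_zero]
      unfold rise
      rw [show (1:ℝ)+(ν+1) = (ν+1)+1 by ring,
        Real.Gamma_add_one (by positivity : ν+1 ≠ 0), Real.Gamma_one,
        show (1:ℝ)+ν = ν+1 by ring]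
      ring
    · -- N ≥ 1
      have hx : (1:ℝ) ≤ (N:ℝ) := by exact_mod_cast h0
      have hxpos : (0:ℝ) < (N:ℝ) := by linarith
      have h1 : (0:ℝ) < (N:ℝ) + ν := by linarith
      have h2 : (0:ℝ) < (N:ℝ) + (ν+1) := by linarith
      push_cast
      rw [rise_succ_s16 hxpos h2, rise_succ_s16 hxpos h1, rise_shift h1]
      have hr : rise (N:ℝ) ν = rise (N:ℝ) ν := rfl
      field_simp

lemma sum_rise (ν : ℝ) (hν : 0 < ν) (N : ℤ) (hN : -1 ≤ N) :
    ∑ m ∈ Finset.Icc (0:ℤ) N, rise ((m:ℤ):ℝ) ν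
      = rise ((N:ℤ):ℝ) (ν+1) / (ν+1) := by
  refine Int.le_induction (motive := fun N _ => ∑ m ∈ Finset.Icc (0:ℤ) N, rise ((m:ℤ):ℝ) ν
      = rise ((N:ℤ):ℝ) (ν+1) / (ν+1)) ?_ ?_ N hN
  · show ∑ m ∈ Finset.Icc (0:ℤ) (-1), rise ((m:ℤ):ℝ) ν = _
    rw [show Finset.Icc (0:ℤ) (-1) = ∅ by simp, Finset.sum_empty]
    push_cast
    rw [rise_neg_one, zero_div]
  · intro N hN ih
    show ∑ m ∈ Finset.Icc (0:ℤ) (N+1), rise ((m:ℤ):ℝ) ν = _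
    have hins : Finset.Icc (0:ℤ) (N+1) = insert (N+1) (Finset.Icc (0:ℤ) N) := by
      ext x; simp; omega
    rw [hins, Finset.sum_insert (by simp), ih, rise_step ν hν N hN]
    have hne : ν + 1 ≠ 0 := by positivity
    field_simp
    ring

lemma sum_rise_Ioc (ν : ℝ) (hν : 0 < ν) (a t : ℤ) (h : a ≤ t) :
    ∑ s ∈ Finset.Ioc a t, rise ((t - s : ℤ):ℝ) ν
      = rise ((t - a - 1 : ℤ):ℝ) (ν+1) / (ν+1) := by
  rw [← sum_rise ν hν (t - a - 1) (by omega)]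
  apply Finset.sum_nbij' (fun s => t - s) (fun m => t - m)
  · intro x hx; simp at hx ⊢; omega
  · intro x hx; simp at hx ⊢; omega
  · intro x _; omega
  · intro x _; omega
  · intro x _; rfl

lemma rise_cross (ν : ℝ) (hν : 0 < ν) (u m : ℤ) (hu : 1 ≤ u) (hum : u ≤ m)
    (d : ℤ) (hd : 0 ≤ d) :
    rise ((u:ℤ):ℝ) ν * rise ((m+d:ℤ):ℝ) ν ≤ rise ((u+d:ℤ):ℝ) ν * rise ((m:ℤ):ℝ) ν := by
  refine Int.le_induction (motive := fun d _ => rise ((u:ℤ):ℝ) ν * rise ((m+d:ℤ):ℝ) ν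
      ≤ rise ((u+d:ℤ):ℝ) ν * rise ((m:ℤ):ℝ) ν) ?_ ?_ d hd
  · show rise ((u:ℤ):ℝ) ν * rise ((m+0:ℤ):ℝ) ν ≤ rise ((u+0:ℤ):ℝ) ν * rise ((m:ℤ):ℝ) ν
    rw [add_zero, add_zero]
  · intro d hd ih
    show rise ((u:ℤ):ℝ) ν * rise ((m+(d+1):ℤ):ℝ) ν
        ≤ rise ((u+(d+1):ℤ):ℝ) ν * rise ((m:ℤ):ℝ) ν
    have hU : (0:ℝ) < ((u+d:ℤ):ℝ) := by exact_mod_cast (by omega : (0:ℤ) < u + d)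
    have hM : (0:ℝ) < ((m+d:ℤ):ℝ) := by exact_mod_cast (by omega : (0:ℤ) < m + d)
    have hUν : (0:ℝ) < ((u+d:ℤ):ℝ) + ν := by linarith
    have hMν : (0:ℝ) < ((m+d:ℤ):ℝ) + ν := by linarith
    have e1 : ((m+(d+1):ℤ):ℝ) = ((m+d:ℤ):ℝ) + 1 := by push_cast; ring
    have e2 : ((u+(d+1):ℤ):ℝ) = ((u+d:ℤ):ℝ) + 1 := by push_cast; ring
    rw [e1, e2, rise_succ_s16 hM hMν, rise_succ_s16 hU hUν]
    have hA : (0:ℝ) < rise ((u:ℤ):ℝ) ν :=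
      rise_pos_s16 (by exact_mod_cast (by omega : (0:ℤ) < u)) (by
        have : (0:ℝ) < ((u:ℤ):ℝ) := by exact_mod_cast (by omega : (0:ℤ) < u)
        linarith)
    have hB : (0:ℝ) < rise ((m+d:ℤ):ℝ) ν := rise_pos_s16 hM hMν
    have hC : (0:ℝ) < rise ((u+d:ℤ):ℝ) ν := rise_pos_s16 hU hUν
    have hD : (0:ℝ) < rise ((m:ℤ):ℝ) ν :=
      rise_pos_s16 (by exact_mod_cast (by omega : (0:ℤ) < m)) (by
        have : (0:ℝ) < ((m:ℤ):ℝ) := by exact_mod_cast (by omega : (0:ℤ) < m)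
        linarith)
    have hr : (((m+d:ℤ):ℝ) + ν)/((m+d:ℤ):ℝ) ≤ (((u+d:ℤ):ℝ) + ν)/((u+d:ℤ):ℝ) := by
      rw [div_le_div_iff₀ hM hU]
      have hum' : ((u:ℤ):ℝ) ≤ ((m:ℤ):ℝ) := by exact_mod_cast hum
      have : ((u+d:ℤ):ℝ) ≤ ((m+d:ℤ):ℝ) := by exact_mod_cast (by omega : u+d ≤ m+d)
      nlinarith
    have hr1 : (0:ℝ) < (((m+d:ℤ):ℝ) + ν)/((m+d:ℤ):ℝ) := by positivity
    calc rise ((u:ℤ):ℝ) ν * (rise ((m+d:ℤ):ℝ) ν * ((((m+d:ℤ):ℝ)+ν)/((m+d:ℤ):ℝ)))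
        = (rise ((u:ℤ):ℝ) ν * rise ((m+d:ℤ):ℝ) ν) * ((((m+d:ℤ):ℝ)+ν)/((m+d:ℤ):ℝ)) := by
          ring
      _ ≤ (rise ((u+d:ℤ):ℝ) ν * rise ((m:ℤ):ℝ) ν) * ((((m+d:ℤ):ℝ)+ν)/((m+d:ℤ):ℝ)) :=
          mul_le_mul_of_nonneg_right ih hr1.le
      _ ≤ (rise ((u+d:ℤ):ℝ) ν * rise ((m:ℤ):ℝ) ν) * ((((u+d:ℤ):ℝ)+ν)/((u+d:ℤ):ℝ)) :=
          mul_le_mul_of_nonneg_left hr (by positivity)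
      _ = rise ((u+d:ℤ):ℝ) ν * ((((u+d:ℤ):ℝ)+ν)/((u+d:ℤ):ℝ)) * rise ((m:ℤ):ℝ) ν := by
          ring

lemma rise_le_self (ν : ℝ) (hν : 0 < ν) (hν1 : ν < 1) (n : ℤ) (hn : 0 ≤ n) :
    rise ((n:ℤ):ℝ) ν ≤ ((n:ℤ):ℝ) := by
  rcases eq_or_lt_of_le hn with h | h
  · rw [← h]; push_cast; rw [rise_zero]
  · have hn1 : (1:ℝ) ≤ ((n:ℤ):ℝ) := by exact_mod_cast h
    have hnpos : (0:ℝ) < ((n:ℤ):ℝ) := by linarith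
    set x : ℝ := ((n:ℤ):ℝ)
    have hmem1 : x ∈ Set.Ioi (0:ℝ) := hnpos
    have hmem2 : x + 1 ∈ Set.Ioi (0:ℝ) := by simp [Set.mem_Ioi]; linarith
    have hcv := Real.convexOn_Gamma.2 hmem1 hmem2 (by linarith : (0:ℝ) ≤ 1 - ν)
      hν.le (by ring)
    simp only [smul_eq_mul] at hcv
    have harg : (1-ν) * x + ν * (x+1) = x + ν := by ring
    rw [harg, Real.Gamma_add_one hnpos.ne'] at hcv
    have hGx : (0:ℝ) < Real.Gamma x := Real.Gamma_pos_of_pos hnpos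
    have : rise x ν ≤ (1-ν) + ν * x := by
      rw [rise, div_le_iff₀ hGx]
      calc Real.Gamma (x + ν) ≤ (1-ν) * Real.Gamma x + ν * (x * Real.Gamma x) := hcv
        _ = ((1-ν) + ν * x) * Real.Gamma x := by ring
    nlinarith

lemma rise_pred (ν : ℝ) (hν : 0 < ν) (n : ℤ) (hn : 0 ≤ n) :
    rise ((n-1:ℤ):ℝ) (ν+1) = (((n:ℤ):ℝ) - 1) * rise ((n:ℤ):ℝ) ν := by
  rcases eq_or_lt_of_le hn with h | h
  · rw [← h]; push_cast; rw [rise_neg_one, rise_zero]; ring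
  · rcases eq_or_lt_of_le (by omega : (1:ℤ) ≤ n) with h1 | h1
    · rw [← h1]; push_cast
      rw [show (1:ℝ)-1 = 0 by ring, rise_zero]; ring
    · -- n ≥ 2
      have hx2 : (2:ℝ) ≤ ((n:ℤ):ℝ) := by exact_mod_cast h1
      set x : ℝ := ((n:ℤ):ℝ)
      have e : ((n-1:ℤ):ℝ) = x - 1 := by push_cast; ring
      rw [e]
      unfold rise
      have hx1 : (0:ℝ) < x - 1 := by linarith
      have hG : Real.Gamma x = (x-1) * Real.Gamma (x-1) := by
        rw [show x = (x-1)+1 by ring, Real.Gamma_add_one hx1.ne']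
        ring_nf
      have hG1 : Real.Gamma (x-1) ≠ 0 := (Real.Gamma_pos_of_pos hx1).ne'
      have hGx : Real.Gamma x ≠ 0 := (Real.Gamma_pos_of_pos (by linarith : (0:ℝ) < x)).ne'
      rw [show x - 1 + (ν+1) = x + ν by ring, hG]
      field_simp

theorem greens_function_abs_sum (ν : ℝ) (hν : 0 < ν) (hν1 : ν < 1) (a b : ℤ)
    (hab : a < b) :
    ∀ t : ℤ, a ≤ t → t ≤ b →
      (∑ s ∈ Finset.Icc (a + 1) b, |Grn ν a b t s|) =
        rise ((t - a : ℤ) : ℝ) ν * ((b : ℝ) - t) / Real.Gamma (ν + 2) ∧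
      (∑ s ∈ Finset.Icc (a + 1) b, |Grn ν a b t s|) ≤
        ((b : ℝ) - a) ^ 2 / (4 * Real.Gamma (ν + 2)) := by
  intro t hat htb
  have hΓ : (0:ℝ) < Real.Gamma (1+ν) := Real.Gamma_pos_of_pos (by linarith)
  have hba : (1:ℝ) ≤ ((b-a:ℤ):ℝ) := by exact_mod_cast (by omega : (1:ℤ) ≤ b - a)
  have hRba : (0:ℝ) < rise ((b-a:ℤ):ℝ) ν := rise_pos_s16 (by linarith) (by linarith)
  have hK : (0:ℝ) ≤ rise ((t-a:ℤ):ℝ) ν := rise_int_nonneg ν hν _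
  have hΓ2 : Real.Gamma (ν+2) = (ν+1) * Real.Gamma (1+ν) := by
    rw [show ν+2 = (ν+1)+1 by ring, Real.Gamma_add_one (by positivity : ν+1 ≠ 0),
      show (1:ℝ)+ν = ν+1 by ring]
  have hΓ2pos : (0:ℝ) < Real.Gamma (ν+2) := Real.Gamma_pos_of_pos (by linarith)
  have hGrn : ∀ s : ℤ, Grn ν a b t s
      = rise ((t-s:ℤ):ℝ) ν / Real.Gamma (1+ν)
        - rise ((b-s:ℤ):ℝ) ν * rise ((t-a:ℤ):ℝ) ν
          / (Real.Gamma (1+ν) * rise ((b-a:ℤ):ℝ) ν) := by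
    intro s
    unfold Grn
    split_ifs with h
    · rw [rise_nonpos ν (by omega : t - s ≤ 0)]
      ring
    · ring
  have hGle : ∀ s ∈ Finset.Icc (a+1) b, Grn ν a b t s ≤ 0 := by
    intro s hs
    simp only [Finset.mem_Icc] at hs
    rw [hGrn s, sub_nonpos]
    rcases le_or_gt t s with h | h
    · rw [rise_nonpos ν (by omega : t - s ≤ 0), zero_div]
      have h1 : (0:ℝ) ≤ rise ((b-s:ℤ):ℝ) ν := rise_int_nonneg ν hν _
      positivity
    · have key := rise_cross ν hν (t-s) (t-a) (by omega) (by omega) (b-t) (by omega)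
      rw [show t-s+(b-t) = b-s by ring, show t-a+(b-t) = b-a by ring] at key
      rw [div_le_div_iff₀ hΓ (by positivity)]
      calc rise ((t-s:ℤ):ℝ) ν * (Real.Gamma (1+ν) * rise ((b-a:ℤ):ℝ) ν)
          = (rise ((t-s:ℤ):ℝ) ν * rise ((b-a:ℤ):ℝ) ν) * Real.Gamma (1+ν) := by ring
        _ ≤ (rise ((b-s:ℤ):ℝ) ν * rise ((t-a:ℤ):ℝ) ν) * Real.Gamma (1+ν) :=
            mul_le_mul_of_nonneg_right key hΓ.le
        _ = rise ((b-s:ℤ):ℝ) ν * rise ((t-a:ℤ):ℝ) ν * Real.Gamma (1+ν) := by ring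
  have habs : ∀ s ∈ Finset.Icc (a+1) b, |Grn ν a b t s| = -Grn ν a b t s :=
    fun s hs => abs_of_nonpos (hGle s hs)
  have hIcc : Finset.Icc (a+1) b = Finset.Ioc a b := by ext x; simp
  have hsum : (∑ s ∈ Finset.Icc (a + 1) b, |Grn ν a b t s|)
      = rise ((t - a : ℤ):ℝ) ν * ((b:ℝ) - t) / Real.Gamma (ν+2) := by
    rw [Finset.sum_congr rfl habs]
    have e1 : ∀ s ∈ Finset.Icc (a+1) b, -Grn ν a b t s
        = rise ((b-s:ℤ):ℝ) ν
            * (rise ((t-a:ℤ):ℝ) ν / (Real.Gamma (1+ν) * rise ((b-a:ℤ):ℝ) ν))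
          - rise ((t-s:ℤ):ℝ) ν / Real.Gamma (1+ν) := by
      intro s _; rw [hGrn s]; ring
    rw [Finset.sum_congr rfl e1, Finset.sum_sub_distrib, ← Finset.sum_mul,
      ← Finset.sum_div, hIcc]
    rw [sum_rise_Ioc ν hν a b hab.le]
    have hsplit : (∑ s ∈ Finset.Ioc a t, rise ((t-s:ℤ):ℝ) ν)
        + (∑ s ∈ Finset.Ioc t b, rise ((t-s:ℤ):ℝ) ν)
        = ∑ s ∈ Finset.Ioc a b, rise ((t-s:ℤ):ℝ) ν := by
      rw [← Finset.Ioc_union_Ioc_eq_Ioc hat htb,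
        Finset.sum_union (by
          rw [Finset.disjoint_left]; intro x hx hx'
          simp only [Finset.mem_Ioc] at hx hx'; omega)]
    have hzero : (∑ s ∈ Finset.Ioc t b, rise ((t-s:ℤ):ℝ) ν) = 0 :=
      Finset.sum_eq_zero fun s hs => by
        simp only [Finset.mem_Ioc] at hs
        exact rise_nonpos ν (by omega)
    rw [← hsplit, hzero, add_zero, sum_rise_Ioc ν hν a t hat,
      rise_pred ν hν (b-a) (by omega), rise_pred ν hν (t-a) (by omega), hΓ2]
    have h1 : Real.Gamma (1+ν) ≠ 0 := hΓ.ne'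
    have h2 : rise ((b-a:ℤ):ℝ) ν ≠ 0 := hRba.ne'
    have h3 : (ν:ℝ) + 1 ≠ 0 := by positivity
    have key : ∀ (R K G n x y z : ℝ), G ≠ 0 → R ≠ 0 → n ≠ 0 → x - y = z →
        x * R / n * (K / (G * R)) - y * K / n / G = K * z / (n * G) := by
      intro R K G n x y z hG hR hn hxyz
      rw [← hxyz]; field_simp
    have hxyz : (((b-a:ℤ):ℝ) - 1) - (((t-a:ℤ):ℝ) - 1) = (b:ℝ) - (t:ℝ) := by
      push_cast; ring
    exact key _ _ _ _ _ _ _ h1 h2 h3 hxyz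
  refine ⟨hsum, ?_⟩
  rw [hsum]
  have hKle : rise ((t-a:ℤ):ℝ) ν ≤ ((t-a:ℤ):ℝ) := rise_le_self ν hν hν1 (t-a) (by omega)
  have hta : ((t-a:ℤ):ℝ) = (t:ℝ) - a := by push_cast; ring
  have hKle' : rise ((t-a:ℤ):ℝ) ν ≤ (t:ℝ) - a := le_trans hKle (le_of_eq hta)
  have hbt : (0:ℝ) ≤ (b:ℝ) - t := by exact_mod_cast (by omega : (0:ℤ) ≤ b - t)
  have h1 : rise ((t-a:ℤ):ℝ) ν * ((b:ℝ)-t) ≤ ((t:ℝ)-a) * ((b:ℝ)-t) :=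
    mul_le_mul_of_nonneg_right hKle' hbt
  have h2 : ((t:ℝ)-a) * ((b:ℝ)-t) * 4 ≤ ((b:ℝ)-a)^2 := by
    nlinarith [sq_nonneg (((t:ℝ)-a) - ((b:ℝ)-t))]
  rw [div_le_div_iff₀ hΓ2pos (by positivity)]
  nlinarith [h1, h2, hΓ2pos]
end
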